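/- arXiv:2401.05937 — 8 statements merged into one kernel-verified Lean document; each statement's English description precedes it below -/
import Mathlib

section
/- Let G be a profinite group and let X be a closed subgroup of G. Then X is open in G if and only if the set of closed subgroups of G that contain X is finite. -/
open scoped Pointwise

/-- Let `G` be a profinite group and let `X` be a closed subgroup of `G`.
Then `X` is open in `G` if and only if the set of closed subgroups of `G`
that contain `X` is finite. -/
theorem closed_subgroup_isOpen_iff_finite_closed_oversubgroups
    {G : Type*} [Group G] [TopologicalSpace G] [IsTopologicalGroup G]
    [CompactSpace G] [T2Space G] [TotallyDisconnectedSpace G]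
    (X : Subgroup G) (hX : IsClosed (X : Set G)) :
    IsOpen (X : Set G) ↔ {Y : Subgroup G | IsClosed (Y : Set G) ∧ X ≤ Y}.Finite := by
  constructor
  · intro hopen
    have hfin : Finite (G ⧸ X) := X.quotient_finite_of_isOpen hopen
    apply Set.Finite.subset (s := {Y : Subgroup G | X ≤ Y})
    · have hinj : Set.InjOn (fun Y : Subgroup G => (QuotientGroup.mk '' (Y : Set G) : Set (G ⧸ X)))
          {Y : Subgroup G | X ≤ Y} := by
        intro Y₁ h₁ Y₂ h₂ h
        have key : ∀ (Y : Subgroup G), X ≤ Y →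
            ((QuotientGroup.mk : G → G ⧸ X) ⁻¹' (QuotientGroup.mk '' (Y : Set G)) : Set G) = Y := by
          intro Y hY
          ext g
          simp only [Set.mem_preimage, Set.mem_image, SetLike.mem_coe]
          constructor
          · rintro ⟨y, hy, hgy⟩
            have : y⁻¹ * g ∈ X := QuotientGroup.eq.mp hgy
            have := mul_mem hy (hY this)
            simpa using this
          · intro hg; exact ⟨g, hg, rfl⟩
        have := congrArg (fun s => QuotientGroup.mk ⁻¹' s) h
        simp only at this
        rw [key Y₁ h₁, key Y₂ h₂] at this
        exact SetLike.coe_injective this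
      exact Set.Finite.of_finite_image (Set.toFinite _) hinj
    · exact fun Y hY => hY.2
  · intro hfin
    -- X is the intersection of the open subgroups containing it
    set T : Set (Subgroup G) := {Y : Subgroup G | IsOpen (Y : Set G) ∧ X ≤ Y} with hT
    have hTfin : T.Finite := hfin.subset (fun Y hY => ⟨Y.isClosed_of_isOpen hY.1, hY.2⟩)
    have hXeq : (X : Set G) = ⋂ Y ∈ T, (Y : Set G) := by
      apply Set.Subset.antisymm
      · exact Set.subset_iInter₂ fun Y hY => hY.2
      · intro g hg
        by_contra hgX
        have hU : (X : Set G) ⊆ {g}ᶜ := fun x hx hxg => hgX (Set.mem_singleton_iff.mp hxg ▸ hx)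
        obtain ⟨V, hV, hVX⟩ := compact_open_separated_mul_left hX.isCompact
          (isOpen_compl_singleton) hU
        obtain ⟨O, hOV, hOopen, hO1⟩ := mem_nhds_iff.mp hV
        obtain ⟨W, hWclopen, hW1, hWO⟩ := compact_exists_isClopen_in_isOpen hOopen hO1
        obtain ⟨H, hH⟩ := IsTopologicalGroup.exist_openNormalSubgroup_sub_clopen_nhds_of_one
          hWclopen hW1
        -- H ⊔ X is an open subgroup containing X, contained in {g}ᶜ
        have hmul : ((H.toSubgroup ⊔ X : Subgroup G) : Set G) = (H : Set G) * (X : Set G) :=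
          Subgroup.normal_mul H.toSubgroup X
        have hsub : ((H.toSubgroup ⊔ X : Subgroup G) : Set G) ⊆ {g}ᶜ := by
          rw [hmul]
          refine Set.Subset.trans ?_ hVX
          exact Set.mul_subset_mul_right (Set.Subset.trans hH (Set.Subset.trans hWO hOV))
        have hopen : IsOpen ((H.toSubgroup ⊔ X : Subgroup G) : Set G) := by
          apply Subgroup.isOpen_mono (H₁ := H.toSubgroup) (H₂ := H.toSubgroup ⊔ X) le_sup_left
          exact H.isOpen'
        have hmem : H.toSubgroup ⊔ X ∈ T := ⟨hopen, le_sup_right⟩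
        have := Set.mem_iInter₂.mp hg _ hmem
        exact hsub this rfl
    rw [hXeq]
    exact hTfin.isOpen_biInter fun Y hY => hY.1
end

section
/- Let G be a profinite group, let H be a closed subgroup of G, and let (U_i)_{i ∈ I} be a nonempty family of closed subgroups of G that is filtered from below, i.e., for all i, j ∈ I there exists k ∈ I with U_k ⊆ U_i ∩ U_j. Let U = ⋂_{i ∈ I} U_i. If the product set UH = {uh : u ∈ U, h ∈ H} is open in G, then there exists i ∈ I such that UH = U_iH (as subsets of G). -/
open scoped Pointwise

/-- Let `G` be a profinite group, `H` a closed subgroup of `G`, and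
`(U i)_{i ∈ I}` a nonempty family of closed subgroups of `G` filtered from below.
If the product set `(⋂ i, U i) * H` is open in `G`, then it equals `U i * H` for some `i`. -/
theorem eq_of_filtered_inter_mul_isOpen
    {G : Type*} [Group G] [TopologicalSpace G] [IsTopologicalGroup G]
    [CompactSpace G] [T2Space G] [TotallyDisconnectedSpace G]
    (H : Subgroup G) (hH : IsClosed (H : Set G))
    {I : Type*} [Nonempty I] (U : I → Subgroup G)
    (hU : ∀ i, IsClosed ((U i : Subgroup G) : Set G))
    (hfil : ∀ i j, ∃ k, U k ≤ U i ⊓ U j) :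
    IsOpen (((⨅ i, U i : Subgroup G) : Set G) * (H : Set G)) →
      ∃ i, ((⨅ i, U i : Subgroup G) : Set G) * (H : Set G) = (U i : Set G) * (H : Set G) := by
  intro hopen
  set V : Subgroup G := ⨅ i, U i with hV
  -- V * H ⊆ U i * H always
  have hsub : ∀ i, (V : Set G) * (H : Set G) ⊆ (U i : Set G) * (H : Set G) := by
    intro i
    exact Set.mul_subset_mul_right (by exact_mod_cast iInf_le U i)
  -- key: ⋂ i, U i * H = V * H
  have hdir : Directed (· ⊇ ·) (fun i => (U i : Set G) * (H : Set G)) := by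
    intro i j
    obtain ⟨k, hk⟩ := hfil i j
    exact ⟨k, Set.mul_subset_mul_right (fun x hx => (hk hx).1),
      Set.mul_subset_mul_right (fun x hx => (hk hx).2)⟩
  have hkey : (⋂ i, (U i : Set G) * (H : Set G)) ⊆ (V : Set G) * (H : Set G) := by
    intro x hx
    -- x • H ∩ U i is nonempty for all i
    have hne : ∀ i, ((x • (H : Set G)) ∩ (U i : Set G)).Nonempty := by
      intro i
      have := Set.mem_iInter.1 hx i
      obtain ⟨u, hu, h, hh, rfl⟩ := this
      refine ⟨u, ?_, hu⟩
      exact ⟨h⁻¹, H.inv_mem hh, by simp [smul_eq_mul, mul_assoc]⟩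
    have hcomp : IsCompact (x • (H : Set G)) :=
      (hH.isCompact).smul x
    by_contra hcon
    have hempty : ((x • (H : Set G)) ∩ ⋂ i, (U i : Set G)) = ∅ := by
      rw [Set.eq_empty_iff_forall_notMem]
      rintro u ⟨⟨h, hh, rfl⟩, hu2⟩
      apply hcon
      refine ⟨x • h, ?_, h⁻¹, H.inv_mem hh, by simp [smul_eq_mul, mul_assoc]⟩
      rw [hV, Subgroup.coe_iInf]
      exact hu2
    obtain ⟨i, hi⟩ := hcomp.elim_directed_family_closed (fun i => (U i : Set G))
      hU hempty (fun i j => by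
        obtain ⟨k, hk⟩ := hfil i j
        exact ⟨k, fun x hx => (hk hx).1, fun x hx => (hk hx).2⟩)
    exact Set.not_nonempty_empty (hi ▸ hne i)
  -- complement of V*H is compact, intersect with directed family
  have hcompl : IsCompact ((V : Set G) * (H : Set G))ᶜ :=
    hopen.isClosed_compl.isCompact
  have hUH_closed : ∀ i, IsClosed ((U i : Set G) * (H : Set G)) := fun i =>
    ((hU i).isCompact.mul hH.isCompact).isClosed
  have hemp : (((V : Set G) * (H : Set G))ᶜ ∩ ⋂ i, (U i : Set G) * (H : Set G)) = ∅ := by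
    rw [Set.eq_empty_iff_forall_notMem]
    rintro y ⟨hy1, hy2⟩
    exact hy1 (hkey hy2)
  obtain ⟨i, hi⟩ := hcompl.elim_directed_family_closed _ hUH_closed hemp hdir
  refine ⟨i, Set.Subset.antisymm (hsub i) ?_⟩
  intro y hy
  by_contra hyc
  exact Set.eq_empty_iff_forall_notMem.1 hi y ⟨hyc, hy⟩
end

section
/- Let G be a profinite group. The poset of closed subgroups of G (ordered by inclusion) is directly decomposable if and only if there exist nontrivial closed normal subgroups G₁ and G₂ of G such that G₁ ∩ G₂ = {1}, G₁G₂ = G, and π*(G₁) ∩ π*(G₂) = ∅. -/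
open scoped Pointwise

universe u

/-- A poset is directly decomposable if it is order-isomorphic to the product of two
partially ordered sets each having at least two elements. -/
def DirectlyDecomposable (P : Type u) [PartialOrder P] : Prop :=
  ∃ (α β : Type u) (_ : PartialOrder α) (_ : PartialOrder β),
    Nontrivial α ∧ Nontrivial β ∧ Nonempty (P ≃o α × β)

/-- For a profinite group `K`, `piStar K` is the set of primes `p` such that `p` divides the
order of the finite quotient `K/N` for some open normal subgroup `N` of `K`. -/
def piStar (K : Type*) [Group K] [TopologicalSpace K] : Set ℕ :=
  {p | p.Prime ∧ ∃ N : Subgroup K, N.Normal ∧ IsOpen (N : Set K) ∧ p ∣ N.index}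

set_option linter.unusedSectionVars false
set_option maxHeartbeats 1000000

namespace CSP

variable {G : Type u} [Group G] [TopologicalSpace G] [IsTopologicalGroup G]
  [CompactSpace G] [T2Space G] [TotallyDisconnectedSpace G]


/-- Open normal subgroup predicate. -/
def ONS (N : Subgroup G) : Prop := N.Normal ∧ IsOpen (N : Set G)

theorem ONS.top : ONS (⊤ : Subgroup G) := ⟨inferInstance, by simp⟩

theorem ONS.inf {N M : Subgroup G} (hN : ONS N) (hM : ONS M) : ONS (N ⊓ M) := by
  refine ⟨?_, ?_⟩
  · haveI := hN.1; haveI := hM.1; infer_instance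
  · rw [Subgroup.coe_inf]; exact hN.2.inter hM.2

theorem ONS.isClosed {N : Subgroup G} (hN : ONS N) : IsClosed (N : Set G) :=
  Subgroup.isClosed_of_isOpen N hN.2

theorem exists_ons_sub {U : Set G} (hU : IsOpen U) (h1 : (1 : G) ∈ U) :
    ∃ N : Subgroup G, ONS N ∧ (N : Set G) ⊆ U := by
  obtain ⟨V, hV, h1V, hVU⟩ := compact_exists_isClopen_in_isOpen hU h1
  obtain ⟨H, hH⟩ := IsTopologicalGroup.exist_openNormalSubgroup_sub_clopen_nhds_of_one hV h1V
  exact ⟨H.toSubgroup, ⟨H.isNormal', H.toOpenSubgroup.isOpen⟩, fun x hx => hVU (hH hx)⟩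

theorem exists_ons_not_mem {x : G} (hx : x ≠ 1) : ∃ N : Subgroup G, ONS N ∧ x ∉ N := by
  obtain ⟨N, hN, hsub⟩ := exists_ons_sub (isOpen_compl_singleton (x := x)) (by simpa using hx.symm)
  exact ⟨N, hN, fun h => (hsub h) rfl⟩

theorem eq_one_of_forall_mem {x : G} (h : ∀ N : Subgroup G, ONS N → x ∈ N) : x = 1 := by
  by_contra hx
  obtain ⟨N, hN, hxN⟩ := exists_ons_not_mem hx
  exact hxN (h N hN)

theorem mem_mul_of_mem_sup {X N : Subgroup G} (hN : N.Normal) {g : G} (h : g ∈ X ⊔ N) :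
    ∃ x ∈ X, ∃ n ∈ N, x * n = g := by
  haveI := hN
  have : g ∈ (↑(X ⊔ N) : Set G) := h
  rw [Subgroup.mul_normal] at this
  simpa [Set.mem_mul] using this

theorem mem_sup_of_mem_mul {X N : Subgroup G} (hN : N.Normal) {g x : G} (hx : x ∈ X)
    (hn : x⁻¹ * g ∈ N) : g ∈ X ⊔ N := by
  haveI := hN
  have : g ∈ (↑X : Set G) * ↑N := ⟨x, hx, x⁻¹ * g, hn, by group⟩
  rwa [← Subgroup.mul_normal] at this

/-- A closed subgroup is the intersection of its open-normal thickenings. -/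
theorem mem_closed_of_forall_mem_sup {X : Subgroup G} (hX : IsClosed (X : Set G)) {g : G}
    (h : ∀ N : Subgroup G, ONS N → g ∈ X ⊔ N) : g ∈ X := by
  classical
  let ι := {N : Subgroup G // ONS N}
  haveI : Nonempty ι := ⟨⟨⊤, ONS.top⟩⟩
  let s : ι → Set G := fun N => (X : Set G) ∩ {y | g⁻¹ * y ∈ N.1}
  have hclosed : ∀ N : ι, IsClosed (s N) := by
    intro N
    exact hX.inter ((N.2.isClosed).preimage (continuous_const.mul continuous_id))
  have hne : ∀ N : ι, (s N).Nonempty := by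
    intro N
    obtain ⟨x, hx, n, hn, hxn⟩ := mem_mul_of_mem_sup N.2.1 (h N.1 N.2)
    refine ⟨x, hx, ?_⟩
    have : g⁻¹ * x = n⁻¹ := by rw [← hxn]; group
    simp only [Set.mem_setOf_eq, this]
    exact inv_mem hn
  have hdir : Directed (· ⊇ ·) s := by
    intro N M
    refine ⟨⟨N.1 ⊓ M.1, N.2.inf M.2⟩, ?_, ?_⟩
    · exact fun y hy => ⟨hy.1, (Subgroup.mem_inf.mp hy.2).1⟩
    · exact fun y hy => ⟨hy.1, (Subgroup.mem_inf.mp hy.2).2⟩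
  obtain ⟨y, hy⟩ := IsCompact.nonempty_iInter_of_directed_nonempty_isCompact_isClosed
    s hdir hne (fun N => (hclosed N).isCompact) hclosed
  have hyX : y ∈ X := (Set.mem_iInter.mp hy ⟨⊤, ONS.top⟩).1
  have : g⁻¹ * y = 1 := by
    apply eq_one_of_forall_mem
    intro N hN
    exact (Set.mem_iInter.mp hy ⟨N, hN⟩).2
  have hg : g = y := inv_mul_eq_one.mp this
  rwa [hg]


/-- The product of two elementwise-commuting subgroups, as a subgroup. -/
def mulSG (U V : Subgroup G) (hc : ∀ x ∈ U, ∀ y ∈ V, x * y = y * x) : Subgroup G where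
  carrier := (U : Set G) * (V : Set G)
  one_mem' := ⟨1, one_mem _, 1, one_mem _, one_mul 1⟩
  mul_mem' := by
    rintro a b ⟨x, hx, y, hy, rfl⟩ ⟨x', hx', y', hy', rfl⟩
    refine ⟨x * x', mul_mem hx hx', y * y', mul_mem hy hy', ?_⟩
    have hcomm : y * x' = x' * y := (hc x' hx' y hy).symm
    rw [mul_assoc x y (x' * y'), ← mul_assoc y x' y', hcomm, mul_assoc x' y y',
      ← mul_assoc x x' (y * y')]
  inv_mem' := by
    rintro a ⟨x, hx, y, hy, rfl⟩
    refine ⟨x⁻¹, inv_mem hx, y⁻¹, inv_mem hy, ?_⟩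
    have hcomm : Commute x⁻¹ y⁻¹ := Commute.inv_inv (hc x hx y hy)
    rw [mul_inv_rev]
    exact hcomm.eq

theorem coe_mulSG (U V : Subgroup G) (hc : ∀ x ∈ U, ∀ y ∈ V, x * y = y * x) :
    (mulSG U V hc : Set G) = (U : Set G) * (V : Set G) := rfl

theorem mem_mulSG {U V : Subgroup G} {hc : ∀ x ∈ U, ∀ y ∈ V, x * y = y * x} {z : G} :
    z ∈ mulSG U V hc ↔ ∃ x ∈ U, ∃ y ∈ V, x * y = z := Iff.rfl

theorem isClosed_mulSG {U V : Subgroup G} (hU : IsClosed (U : Set G))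
    (hV : IsClosed (V : Set G)) (hc : ∀ x ∈ U, ∀ y ∈ V, x * y = y * x) :
    IsClosed (mulSG U V hc : Set G) := by
  rw [coe_mulSG]
  exact (hU.isCompact.mul hV.isCompact).isClosed

/-- Commutativity passes to topological closures. -/
theorem topologicalClosure_comm {s : Subgroup G} (h : ∀ x ∈ s, ∀ y ∈ s, x * y = y * x) :
    ∀ x ∈ s.topologicalClosure, ∀ y ∈ s.topologicalClosure, x * y = y * x := by
  have step1 : ∀ y ∈ s, ∀ x ∈ s.topologicalClosure, x * y = y * x := by
    intro y hy x hx
    have hcl : IsClosed {z : G | z * y = y * z} :=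
      isClosed_eq (continuous_id.mul continuous_const) (continuous_const.mul continuous_id)
    have : (s : Set G) ⊆ {z : G | z * y = y * z} := fun z hz => h z hz y hy
    exact closure_minimal this hcl hx
  intro x hx y hy
  have hcl : IsClosed {z : G | x * z = z * x} :=
    isClosed_eq (continuous_const.mul continuous_id) (continuous_id.mul continuous_const)
  have : (s : Set G) ⊆ {z : G | x * z = z * x} := fun z hz => step1 z hz x hx
  exact closure_minimal this hcl hy

theorem zpowers_comm (g : G) : ∀ x ∈ Subgroup.zpowers g, ∀ y ∈ Subgroup.zpowers g,
    x * y = y * x := by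
  rintro x hx y hy
  obtain ⟨m, rfl⟩ := Subgroup.mem_zpowers_iff.mp hx
  obtain ⟨n, rfl⟩ := Subgroup.mem_zpowers_iff.mp hy
  exact ((Commute.refl g).zpow_zpow m n).eq

theorem closure_zpowers_comm (g : G) :
    ∀ x ∈ (Subgroup.zpowers g).topologicalClosure, ∀ y ∈ (Subgroup.zpowers g).topologicalClosure,
      x * y = y * x :=
  topologicalClosure_comm (zpowers_comm g)

theorem topologicalClosure_le_sup {s N : Subgroup G} (hNn : N.Normal)
    (hNo : IsOpen (N : Set G)) : s.topologicalClosure ≤ s ⊔ N :=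
  Subgroup.topologicalClosure_minimal s le_sup_left
    (Subgroup.isClosed_of_isOpen _ (Subgroup.isOpen_mono le_sup_right hNo))


theorem mem_sup_iff_mk_mem {X N : Subgroup G} [N.Normal] {g : G} :
    g ∈ X ⊔ N ↔ ((g : G ⧸ N) ∈ X.map (QuotientGroup.mk' N)) := by
  constructor
  · intro h
    have : g ∈ (↑(X ⊔ N) : Set G) := h
    rw [Subgroup.mul_normal] at this
    obtain ⟨x, hx, n, hn, hxn⟩ := Set.mem_mul.mp this
    refine Subgroup.mem_map.mpr ⟨x, hx, ?_⟩
    show ((x : G ⧸ N)) = (g : G ⧸ N)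
    rw [QuotientGroup.eq]
    have : x⁻¹ * g = n := by rw [← hxn]; group
    rw [this]; exact hn
  · intro h
    obtain ⟨x, hx, hxg⟩ := Subgroup.mem_map.mp h
    have : x⁻¹ * g ∈ N := by
      rw [← QuotientGroup.eq]
      exact hxg
    have hg : g ∈ (↑X : Set G) * ↑N := ⟨x, hx, x⁻¹ * g, this, by group⟩
    rwa [← Subgroup.mul_normal] at hg

/-- Membership in `piStar` of a subgroup from order of image in a finite quotient. -/
theorem mem_piStar_of_dvd_orderOf {K : Subgroup G} {N : Subgroup G} [N.Normal]
    (hNo : IsOpen (N : Set G)) {k : G} (hk : k ∈ K) {p : ℕ} (hp : p.Prime)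
    (hdvd : p ∣ orderOf ((k : G ⧸ N))) : p ∈ piStar ↥K := by
  refine ⟨hp, N.subgroupOf K, inferInstance, ?_, ?_⟩
  · have : ((N.subgroupOf K : Subgroup ↥K) : Set ↥K) = (Subtype.val) ⁻¹' (N : Set G) := by
      rfl
    rw [this]
    exact hNo.preimage continuous_subtype_val
  · set f : ↥K →* G ⧸ N := (QuotientGroup.mk' N).comp K.subtype with hf
    have hker : f.ker = N.subgroupOf K := by
      rw [hf, ← MonoidHom.comap_ker, QuotientGroup.ker_mk']
      rfl
    rw [← hker, Subgroup.index_ker f]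
    have h1 : orderOf (f ⟨k, hk⟩) = orderOf ((k : G ⧸ N)) := rfl
    have h2 : orderOf (⟨f ⟨k, hk⟩, ⟨⟨k, hk⟩, rfl⟩⟩ : f.range) = orderOf (f ⟨k, hk⟩) :=
      Subgroup.orderOf_mk _ _
    calc p ∣ orderOf ((k : G ⧸ N)) := hdvd
      _ = orderOf (⟨f ⟨k, hk⟩, ⟨⟨k, hk⟩, rfl⟩⟩ : f.range) := by rw [h1] at h2; exact h2.symm
      _ ∣ Nat.card f.range := orderOf_dvd_natCard _


section Split
variable {G₁ G₂ : Subgroup G} (h₁n : G₁.Normal) (h₂n : G₂.Normal)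
  (hdisj : G₁ ⊓ G₂ = ⊥) (hpi : piStar ↥G₁ ∩ piStar ↥G₂ = ∅)

include h₁n h₂n hdisj in
theorem comm_of_parts' {x y : G} (hx : x ∈ G₁) (hy : y ∈ G₂) : Commute x y :=
  Subgroup.commute_of_normal_of_disjoint G₁ G₂ h₁n h₂n (disjoint_iff.mpr hdisj) x y hx hy

include h₁n h₂n hdisj in
theorem comm_of_parts {x y : G} (hx : x ∈ G₁) (hy : y ∈ G₂) : x * y = y * x :=
  (comm_of_parts' h₁n h₂n hdisj hx hy).eq

include h₁n h₂n hdisj hpi in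
theorem key_split {X : Subgroup G} (hX : IsClosed (X : Set G)) {g₁ g₂ : G}
    (h₁ : g₁ ∈ G₁) (h₂ : g₂ ∈ G₂) (hx : g₁ * g₂ ∈ X) : g₁ ∈ X ∧ g₂ ∈ X := by
  have hg₁X : g₁ ∈ X := by
    apply mem_closed_of_forall_mem_sup hX
    intro N hN
    obtain ⟨hNn, hNo⟩ := hN
    haveI := hNn
    haveI : Finite (G ⧸ N) := Subgroup.quotient_finite_of_isOpen N hNo
    set u : G ⧸ N := (g₁ : G ⧸ N) with hu
    set v : G ⧸ N := (g₂ : G ⧸ N) with hv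
    have cuv : Commute u v :=
      Commute.map (comm_of_parts' h₁n h₂n hdisj h₁ h₂) (QuotientGroup.mk' N)
    set m := orderOf u with hm
    set n := orderOf v with hn
    have hco : Nat.Coprime m n := by
      by_contra hco
      obtain ⟨p, hp, hpdvd⟩ := Nat.exists_prime_and_dvd hco
      have hp1 : p ∈ piStar ↥G₁ :=
        mem_piStar_of_dvd_orderOf hNo h₁ hp (dvd_trans hpdvd (Nat.gcd_dvd_left m n))
      have hp2 : p ∈ piStar ↥G₂ :=
        mem_piStar_of_dvd_orderOf hNo h₂ hp (dvd_trans hpdvd (Nat.gcd_dvd_right m n))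
      have : p ∈ piStar ↥G₁ ∩ piStar ↥G₂ := ⟨hp1, hp2⟩
      rw [hpi] at this
      exact this
    obtain ⟨k, hk1, hk0⟩ := Nat.chineseRemainder hco 1 0
    have hvk : v ^ k = 1 := orderOf_dvd_iff_pow_eq_one.mp (Nat.modEq_zero_iff_dvd.mp hk0)
    have huk : u ^ k = u := by
      have := pow_eq_pow_iff_modEq (x := u) (n := k) (m := 1)
      rw [pow_one] at this
      exact this.mpr hk1
    have hmk : ((QuotientGroup.mk' N) ((g₁ * g₂) ^ k)) = u := by
      rw [map_pow, map_mul]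
      show (u * v) ^ k = u
      rw [cuv.mul_pow, hvk, huk, mul_one]
    refine mem_sup_of_mem_mul hNn (pow_mem hx k) ?_
    rw [← QuotientGroup.eq]
    exact hmk
  refine ⟨hg₁X, ?_⟩
  have : g₂ = g₁⁻¹ * (g₁ * g₂) := by group
  rw [this]
  exact mul_mem (inv_mem hg₁X) hx

include h₁n h₂n hdisj hpi in
theorem backward_dir (h1 : G₁ ≠ ⊥) (h2 : G₂ ≠ ⊥) (h₁c : IsClosed (G₁ : Set G))
    (h₂c : IsClosed (G₂ : Set G)) (hprod : (G₁ : Set G) * (G₂ : Set G) = Set.univ) :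
    DirectlyDecomposable {X : Subgroup G // IsClosed (X : Set G)} := by
  classical
  have hcomm := fun x hx y hy => comm_of_parts h₁n h₂n hdisj (x := x) (y := y) hx hy
  have hdec : ∀ g : G, ∃ x ∈ G₁, ∃ y ∈ G₂, x * y = g := by
    intro g
    have : g ∈ (G₁ : Set G) * (G₂ : Set G) := by rw [hprod]; trivial
    exact Set.mem_mul.mp this
  refine ⟨{P : Subgroup G // IsClosed (P : Set G) ∧ P ≤ G₁},
    {P : Subgroup G // IsClosed (P : Set G) ∧ P ≤ G₂}, inferInstance, inferInstance,
    ?_, ?_, ⟨?_⟩⟩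
  · exact ⟨⟨⊥, by rw [Subgroup.coe_bot]; exact isClosed_singleton, bot_le⟩,
      ⟨G₁, h₁c, le_rfl⟩, fun h => h1 ((congrArg Subtype.val h)).symm⟩
  · exact ⟨⟨⊥, by rw [Subgroup.coe_bot]; exact isClosed_singleton, bot_le⟩,
      ⟨G₂, h₂c, le_rfl⟩, fun h => h2 ((congrArg Subtype.val h)).symm⟩
  · refine
      { toFun := fun X => (⟨X.1 ⊓ G₁, by rw [Subgroup.coe_inf]; exact X.2.inter h₁c,
          inf_le_right⟩, ⟨X.1 ⊓ G₂, by rw [Subgroup.coe_inf]; exact X.2.inter h₂c,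
          inf_le_right⟩)
        invFun := fun UV => ⟨mulSG UV.1.1 UV.2.1
            (fun x hx y hy => hcomm x (UV.1.2.2 hx) y (UV.2.2.2 hy)),
          isClosed_mulSG UV.1.2.1 UV.2.2.1 _⟩
        left_inv := ?_
        right_inv := ?_
        map_rel_iff' := ?_ }
    · intro X
      apply Subtype.ext
      ext z
      simp only [mem_mulSG]
      constructor
      · rintro ⟨x, hx, y, hy, rfl⟩
        exact mul_mem (Subgroup.mem_inf.mp hx).1 (Subgroup.mem_inf.mp hy).1
      · intro hz
        obtain ⟨x, hx, y, hy, hxy⟩ := hdec z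
        have hzX : x * y ∈ X.1 := by rw [hxy]; exact hz
        obtain ⟨hxX, hyX⟩ := key_split h₁n h₂n hdisj hpi X.2 hx hy hzX
        exact ⟨x, Subgroup.mem_inf.mpr ⟨hxX, hx⟩, y, Subgroup.mem_inf.mpr ⟨hyX, hy⟩, hxy⟩
    · intro UV
      have e1 : ∀ (U : {P : Subgroup G // IsClosed (P : Set G) ∧ P ≤ G₁})
          (V : {P : Subgroup G // IsClosed (P : Set G) ∧ P ≤ G₂}) (hc : _),
          mulSG U.1 V.1 hc ⊓ G₁ = U.1 := by
        intro U V hc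
        ext z
        constructor
        · intro hz
          obtain ⟨hz1, hzG₁⟩ := Subgroup.mem_inf.mp hz
          obtain ⟨x, hx, y, hy, hxy⟩ := mem_mulSG.mp hz1
          have hyval : y = x⁻¹ * z := by rw [← hxy]; group
          have hyG₁ : y ∈ G₁ := by
            rw [hyval]; exact mul_mem (inv_mem (U.2.2 hx)) hzG₁
          have : y ∈ G₁ ⊓ G₂ := Subgroup.mem_inf.mpr ⟨hyG₁, V.2.2 hy⟩
          rw [hdisj, Subgroup.mem_bot] at this
          rw [this, mul_one] at hxy
          rw [← hxy]; exact hx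
        · intro hz
          exact Subgroup.mem_inf.mpr ⟨mem_mulSG.mpr ⟨z, hz, 1, one_mem _, mul_one z⟩,
            U.2.2 hz⟩
      have e2 : ∀ (U : {P : Subgroup G // IsClosed (P : Set G) ∧ P ≤ G₁})
          (V : {P : Subgroup G // IsClosed (P : Set G) ∧ P ≤ G₂}) (hc : _),
          mulSG U.1 V.1 hc ⊓ G₂ = V.1 := by
        intro U V hc
        ext z
        constructor
        · intro hz
          obtain ⟨hz1, hzG₂⟩ := Subgroup.mem_inf.mp hz
          obtain ⟨x, hx, y, hy, hxy⟩ := mem_mulSG.mp hz1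
          have hxval : x = z * y⁻¹ := by rw [← hxy]; group
          have hxG₂ : x ∈ G₂ := by
            rw [hxval]; exact mul_mem hzG₂ (inv_mem (V.2.2 hy))
          have : x ∈ G₁ ⊓ G₂ := Subgroup.mem_inf.mpr ⟨U.2.2 hx, hxG₂⟩
          rw [hdisj, Subgroup.mem_bot] at this
          rw [this, one_mul] at hxy
          rw [← hxy]; exact hy
        · intro hz
          exact Subgroup.mem_inf.mpr ⟨mem_mulSG.mpr ⟨1, one_mem _, z, hz, one_mul z⟩,
            V.2.2 hz⟩
      exact Prod.ext
        (Subtype.ext (e1 UV.1 UV.2 (fun x hx y hy => hcomm x (UV.1.2.2 hx) y (UV.2.2.2 hy))))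
        (Subtype.ext (e2 UV.1 UV.2 (fun x hx y hy => hcomm x (UV.1.2.2 hx) y (UV.2.2.2 hy))))
    · intro X Y
      constructor
      · intro h
        intro z hz
        obtain ⟨x, hx, y, hy, hxy⟩ := hdec z
        have hzX : x * y ∈ X.1 := by rw [hxy]; exact hz
        obtain ⟨hxX, hyX⟩ := key_split h₁n h₂n hdisj hpi X.2 hx hy hzX
        have h1' : X.1 ⊓ G₁ ≤ Y.1 ⊓ G₁ := h.1
        have h2' : X.1 ⊓ G₂ ≤ Y.1 ⊓ G₂ := h.2
        have hxY : x ∈ Y.1 :=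
          (Subgroup.mem_inf.mp (h1' (Subgroup.mem_inf.mpr ⟨hxX, hx⟩))).1
        have hyY : y ∈ Y.1 :=
          (Subgroup.mem_inf.mp (h2' (Subgroup.mem_inf.mpr ⟨hyX, hy⟩))).1
        rw [← hxy]
        exact mul_mem hxY hyY
      · intro h
        exact ⟨Subtype.mk_le_mk.mpr (inf_le_inf_right G₁ h),
          Subtype.mk_le_mk.mpr (inf_le_inf_right G₂ h)⟩

end Split

section CSGLattice
variable {G : Type u} [Group G] [TopologicalSpace G] [T1Space G]

abbrev CSG (G : Type u) [Group G] [TopologicalSpace G] := {X : Subgroup G // IsClosed (X : Set G)}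

instance : InfSet (CSG G) :=
  ⟨fun S => ⟨sInf (Subtype.val '' S), by
    rw [Subgroup.coe_sInf]
    refine isClosed_biInter ?_
    rintro H ⟨X, hX, rfl⟩
    exact X.2⟩⟩

theorem csg_le_iff {X Y : CSG G} : X ≤ Y ↔ X.1 ≤ Y.1 := Iff.rfl

noncomputable instance : CompleteLattice (CSG G) :=
  completeLatticeOfInf _ (by
    intro S
    constructor
    · intro X hX
      exact csg_le_iff.mpr (sInf_le (Set.mem_image_of_mem _ hX))
    · intro Y hY
      refine csg_le_iff.mpr (le_sInf ?_)
      rintro H ⟨X, hX, rfl⟩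
      exact csg_le_iff.mp (hY hX))

theorem csg_coe_bot : ((⊥ : CSG G)).1 = ⊥ := by
  have hb : IsClosed ((⊥ : Subgroup G) : Set G) := by
    rw [Subgroup.coe_bot]; exact isClosed_singleton
  have h : (⊥ : CSG G) ≤ ⟨⊥, hb⟩ := bot_le
  exact le_antisymm (csg_le_iff.mp h) bot_le

theorem csg_coe_top : ((⊤ : CSG G)).1 = ⊤ := by
  have h : (⟨⊤, isClosed_univ⟩ : CSG G) ≤ ⊤ := le_top
  exact le_antisymm le_top (csg_le_iff.mp h)

theorem csg_coe_inf (X Y : CSG G) : (X ⊓ Y).1 = X.1 ⊓ Y.1 := by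
  have hZ : IsClosed ((X.1 ⊓ Y.1 : Subgroup G) : Set G) := by
    rw [Subgroup.coe_inf]; exact X.2.inter Y.2
  have h : (⟨X.1 ⊓ Y.1, hZ⟩ : CSG G) ≤ X ⊓ Y :=
    le_inf (csg_le_iff.mpr inf_le_left) (csg_le_iff.mpr inf_le_right)
  exact le_antisymm (le_inf (csg_le_iff.mp inf_le_left) (csg_le_iff.mp inf_le_right))
    (csg_le_iff.mp h)

end CSGLattice

section AbstractLattice
variable {L : Type*} [CompleteLattice L] {A B : Type*} [PartialOrder A] [PartialOrder B]

variable (e : L ≃o A × B)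

noncomputable def aEl : L := e.symm ((e ⊤).1, (e ⊥).2)
noncomputable def bEl : L := e.symm ((e ⊥).1, (e ⊤).2)

theorem e_aEl : e (aEl e) = ((e ⊤).1, (e ⊥).2) := e.apply_symm_apply _
theorem e_bEl : e (bEl e) = ((e ⊥).1, (e ⊤).2) := e.apply_symm_apply _

theorem bot1 (l : L) : (e ⊥).1 ≤ (e l).1 := (e.monotone bot_le).1
theorem bot2 (l : L) : (e ⊥).2 ≤ (e l).2 := (e.monotone bot_le).2
theorem top1 (l : L) : (e l).1 ≤ (e ⊤).1 := (e.monotone le_top).1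
theorem top2 (l : L) : (e l).2 ≤ (e ⊤).2 := (e.monotone le_top).2

theorem inf_aEl (x : L) : x ⊓ aEl e = e.symm ((e x).1, (e ⊥).2) := by
  apply le_antisymm
  · have h : e (x ⊓ aEl e) ≤ ((e x).1, (e ⊥).2) := by
      rw [Prod.le_def]
      constructor
      · exact (e.monotone inf_le_left).1
      · have := (e.monotone (inf_le_right : x ⊓ aEl e ≤ aEl e)).2
        rwa [e_aEl] at this
    have := e.symm.monotone h
    rwa [e.symm_apply_apply] at this
  · refine le_inf ?_ ?_
    · rw [OrderIso.symm_apply_le]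
      exact ⟨le_rfl, bot2 e x⟩
    · rw [OrderIso.symm_apply_le, e_aEl]
      exact ⟨top1 e x, le_rfl⟩

theorem inf_bEl (x : L) : x ⊓ bEl e = e.symm ((e ⊥).1, (e x).2) := by
  apply le_antisymm
  · have h : e (x ⊓ bEl e) ≤ ((e ⊥).1, (e x).2) := by
      rw [Prod.le_def]
      constructor
      · have := (e.monotone (inf_le_right : x ⊓ bEl e ≤ bEl e)).1
        rwa [e_bEl] at this
      · exact (e.monotone inf_le_left).2
    have := e.symm.monotone h
    rwa [e.symm_apply_apply] at this
  · refine le_inf ?_ ?_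
    · rw [OrderIso.symm_apply_le]
      exact ⟨bot1 e x, le_rfl⟩
    · rw [OrderIso.symm_apply_le, e_bEl]
      exact ⟨le_rfl, top2 e x⟩

theorem e_inf_aEl (x : L) : e (x ⊓ aEl e) = ((e x).1, (e ⊥).2) := by
  rw [inf_aEl, e.apply_symm_apply]

theorem e_inf_bEl (x : L) : e (x ⊓ bEl e) = ((e ⊥).1, (e x).2) := by
  rw [inf_bEl, e.apply_symm_apply]

theorem decomp (x : L) : (x ⊓ aEl e) ⊔ (x ⊓ bEl e) = x := by
  apply le_antisymm (sup_le inf_le_left inf_le_left)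
  rw [← e.le_iff_le, Prod.le_def]
  constructor
  · have h1 : (e (x ⊓ aEl e)).1 ≤ (e ((x ⊓ aEl e) ⊔ (x ⊓ bEl e))).1 :=
      (e.monotone le_sup_left).1
    rwa [e_inf_aEl] at h1
  · have h2 : (e (x ⊓ bEl e)).2 ≤ (e ((x ⊓ aEl e) ⊔ (x ⊓ bEl e))).2 :=
      (e.monotone le_sup_right).2
    rwa [e_inf_bEl] at h2

theorem inf_aEl_bEl : aEl e ⊓ bEl e = ⊥ := by
  apply le_antisymm ?_ bot_le
  have h : e (aEl e ⊓ bEl e) ≤ e ⊥ := by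
    rw [Prod.le_def]
    constructor
    · have := (e.monotone (inf_le_right : aEl e ⊓ bEl e ≤ bEl e)).1
      rwa [e_bEl] at this
    · have := (e.monotone (inf_le_left : aEl e ⊓ bEl e ≤ aEl e)).2
      rwa [e_aEl] at this
  exact e.le_iff_le.mp h

theorem e_of_le_aEl {u : L} (hu : u ≤ aEl e) : e u = ((e u).1, (e ⊥).2) := by
  refine Prod.ext rfl ?_
  apply le_antisymm
  · have := (e.monotone hu).2
    rwa [e_aEl] at this
  · exact bot2 e u

theorem e_of_le_bEl {v : L} (hv : v ≤ bEl e) : e v = ((e ⊥).1, (e v).2) := by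
  refine Prod.ext ?_ rfl
  apply le_antisymm
  · have := (e.monotone hv).1
    rwa [e_bEl] at this
  · exact bot1 e v

theorem e_sup {u v : L} (hu : u ≤ aEl e) (hv : v ≤ bEl e) :
    e (u ⊔ v) = ((e u).1, (e v).2) := by
  apply le_antisymm
  · have h : u ⊔ v ≤ e.symm ((e u).1, (e v).2) := by
      refine sup_le ?_ ?_
      · rw [OrderIso.le_symm_apply]
        nth_rewrite 1 [e_of_le_aEl e hu]
        exact ⟨le_rfl, bot2 e v⟩
      · rw [OrderIso.le_symm_apply]
        nth_rewrite 1 [e_of_le_bEl e hv]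
        exact ⟨bot1 e u, le_rfl⟩
    have := e.monotone h
    rwa [e.apply_symm_apply] at this
  · exact ⟨(e.monotone le_sup_left).1, (e.monotone le_sup_right).2⟩

theorem sup_proj_a {u v : L} (hu : u ≤ aEl e) (hv : v ≤ bEl e) : (u ⊔ v) ⊓ aEl e = u := by
  rw [inf_aEl, e_sup e hu hv]
  show e.symm ((e u).1, (e ⊥).2) = u
  rw [← e_of_le_aEl e hu, e.symm_apply_apply]

theorem sup_proj_b {u v : L} (hu : u ≤ aEl e) (hv : v ≤ bEl e) : (u ⊔ v) ⊓ bEl e = v := by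
  rw [inf_bEl, e_sup e hu hv]
  show e.symm ((e ⊥).1, (e v).2) = v
  rw [← e_of_le_bEl e hv, e.symm_apply_apply]

theorem nested_inf {u u' v : L} (hu' : u' ≤ u) (hu : u ≤ aEl e) (hv : v ≤ bEl e) :
    u ⊓ (u' ⊔ v) = u' := by
  apply le_antisymm
  · have h : e (u ⊓ (u' ⊔ v)) ≤ e u' := by
      rw [show e u' = ((e u').1, (e ⊥).2) from e_of_le_aEl e (hu'.trans hu)]
      constructor
      · have := (e.monotone (inf_le_right : u ⊓ (u' ⊔ v) ≤ u' ⊔ v)).1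
        rwa [e_sup e (hu'.trans hu) hv] at this
      · have := (e.monotone (inf_le_left : u ⊓ (u' ⊔ v) ≤ u)).2
        rwa [e_of_le_aEl e hu] at this
    exact e.le_iff_le.mp h
  · exact le_inf hu' le_sup_left

theorem nested_inf' {u v v' : L} (hv' : v' ≤ v) (hv : v ≤ bEl e) (hu : u ≤ aEl e) :
    v ⊓ (u ⊔ v') = v' := by
  apply le_antisymm
  · have h : e (v ⊓ (u ⊔ v')) ≤ e v' := by
      rw [show e v' = ((e ⊥).1, (e v').2) from e_of_le_bEl e (hv'.trans hv)]
      constructor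
      · have := (e.monotone (inf_le_left : v ⊓ (u ⊔ v') ≤ v)).1
        rwa [e_of_le_bEl e hv] at this
      · have := (e.monotone (inf_le_right : v ⊓ (u ⊔ v') ≤ u ⊔ v')).2
        rwa [e_sup e hu (hv'.trans hv)] at this
    exact e.le_iff_le.mp h
  · exact le_inf hv' le_sup_right

theorem le_decomp {z u v : L} (hu : u ≤ aEl e) (hv : v ≤ bEl e) (hz : z ≤ u ⊔ v) :
    z = (z ⊓ u) ⊔ (z ⊓ v) := by
  have h1 : z ⊓ aEl e = z ⊓ u := by
    apply le_antisymm
    · refine le_inf inf_le_left ?_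
      have : z ⊓ aEl e ≤ (u ⊔ v) ⊓ aEl e := inf_le_inf_right _ hz
      rwa [sup_proj_a e hu hv] at this
    · exact inf_le_inf_left z hu
  have h2 : z ⊓ bEl e = z ⊓ v := by
    apply le_antisymm
    · refine le_inf inf_le_left ?_
      have : z ⊓ bEl e ≤ (u ⊔ v) ⊓ bEl e := inf_le_inf_right _ hz
      rwa [sup_proj_b e hu hv] at this
    · exact inf_le_inf_left z hv
  rw [← h1, ← h2, decomp]

theorem aEl_ne_bot [Nontrivial A] [Nonempty B] : aEl e ≠ ⊥ := by
  intro h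
  have h2 : ((e ⊤).1, (e ⊥).2) = e ⊥ := by rw [← e_aEl, h]
  have hc : (e ⊤).1 = (e ⊥).1 := by rw [← h2]
  have hall : ∀ x : A, x = (e ⊥).1 := by
    intro x
    have : (e (e.symm (x, Classical.arbitrary B))).1 = x := by rw [e.apply_symm_apply]
    apply le_antisymm
    · rw [← this, ← hc]; exact top1 e _
    · rw [← this]; exact bot1 e _
  obtain ⟨x, y, hxy⟩ := exists_pair_ne A
  exact hxy ((hall x).trans (hall y).symm)

theorem bEl_ne_bot [Nontrivial B] [Nonempty A] : bEl e ≠ ⊥ := by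
  intro h
  have h2 : ((e ⊥).1, (e ⊤).2) = e ⊥ := by rw [← e_bEl, h]
  have hc : (e ⊤).2 = (e ⊥).2 := by rw [← h2]
  have hall : ∀ x : B, x = (e ⊥).2 := by
    intro x
    have : (e (e.symm (Classical.arbitrary A, x))).2 = x := by rw [e.apply_symm_apply]
    apply le_antisymm
    · rw [← this, ← hc]; exact top2 e _
    · rw [← this]; exact bot2 e _
  obtain ⟨x, y, hxy⟩ := exists_pair_ne B
  exact hxy ((hall x).trans (hall y).symm)

end AbstractLattice
/-- membership bridge to the quotient -/
theorem pow_mem_iff_quot {N : Subgroup G} [N.Normal] (w : G) (m : ℕ) :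
    w ^ m ∈ N ↔ ((w : G ⧸ N)) ^ m = 1 := by
  rw [← QuotientGroup.mk_pow, QuotientGroup.eq_one_iff]

theorem exists_zpow_of_mem_sup {w g0 : G} {N : Subgroup G} [N.Normal]
    (h : w ∈ Subgroup.zpowers g0 ⊔ N) :
    ∃ j : ℤ, (w : G ⧸ N) = ((g0 : G ⧸ N)) ^ j := by
  obtain ⟨y, hy, n, hn, hyn⟩ := mem_mul_of_mem_sup inferInstance h
  obtain ⟨j, hj⟩ := Subgroup.mem_zpowers_iff.mp hy
  refine ⟨j, ?_⟩
  have : ((w : G ⧸ N)) = ((y : G ⧸ N)) := by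
    rw [QuotientGroup.eq]
    have hval : w⁻¹ * y = n⁻¹ := by rw [← hyn]; group
    rw [hval]; exact inv_mem hn
  rw [this, ← hj, ← QuotientGroup.mk_zpow]

/-- Existence of a nontrivial "pro-p" element. -/
theorem exists_pro_p_element {A : Subgroup G} (hA : IsClosed (A : Set G)) {p : ℕ}
    (hp : p.Prime) (hpS : p ∈ piStar ↥A) :
    ∃ x : G, x ∈ A ∧ x ≠ 1 ∧ ∀ N : Subgroup G, ONS N → ∃ k : ℕ, x ^ (p ^ k) ∈ N := by
  classical
  obtain ⟨-, N', hN'n, hN'o, hdvd⟩ := hpS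
  haveI : CompactSpace ↥A := isCompact_iff_compactSpace.mp hA.isCompact
  obtain ⟨V, hV, hpre⟩ := isOpen_induced_iff.mp hN'o
  have h1V : (1 : G) ∈ V := by
    have : (1 : ↥A) ∈ Subtype.val ⁻¹' V := by rw [hpre]; exact one_mem N'
    exact this
  obtain ⟨N₀, hONS, hsub⟩ := exists_ons_sub hV h1V
  haveI := hONS.1
  have hle : N₀.subgroupOf A ≤ N' := by
    intro z hz
    have : (z : G) ∈ V := hsub (Subgroup.mem_subgroupOf.mp hz)
    have : z ∈ Subtype.val ⁻¹' V := this
    rwa [hpre] at this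
  have hdvd2 : p ∣ (N₀.subgroupOf A).index :=
    dvd_trans hdvd (Subgroup.index_dvd_of_le hle)
  have hopen : IsOpen ((N₀.subgroupOf A : Subgroup ↥A) : Set ↥A) := by
    have : ((N₀.subgroupOf A : Subgroup ↥A) : Set ↥A) = Subtype.val ⁻¹' (N₀ : Set G) := rfl
    rw [this]
    exact hONS.2.preimage continuous_subtype_val
  haveI : Finite (↥A ⧸ N₀.subgroupOf A) := Subgroup.quotient_finite_of_isOpen _ hopen
  haveI : Fact p.Prime := ⟨hp⟩
  obtain ⟨q, hq⟩ := exists_prime_orderOf_dvd_card' (G := ↥A ⧸ N₀.subgroupOf A) p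
    (by rwa [← Subgroup.index_eq_card])
  obtain ⟨gt, hgt⟩ := QuotientGroup.mk'_surjective (N₀.subgroupOf A) q
  set g : G := (gt : G) with hgdef
  have hgA : g ∈ A := gt.2
  have hchar : ∀ m : ℕ, g ^ m ∈ N₀ ↔ p ∣ m := by
    intro m
    have h1 : g ^ m ∈ N₀ ↔ gt ^ m ∈ N₀.subgroupOf A := by
      rw [Subgroup.mem_subgroupOf]
      norm_cast
    have h2 : gt ^ m ∈ N₀.subgroupOf A ↔ q ^ m = 1 := by
      rw [← hgt, ← map_pow]
      exact (QuotientGroup.eq_one_iff _).symm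
    have h3 : q ^ m = 1 ↔ p ∣ m := by
      rw [← hq]
      exact orderOf_dvd_iff_pow_eq_one.symm
    rw [h1, h2, h3]
  -- the procyclic subgroup
  set C : Subgroup G := (Subgroup.zpowers g).topologicalClosure with hC
  have hgC : g ∈ C := Subgroup.le_topologicalClosure _ (Subgroup.mem_zpowers g)
  have hCA : C ≤ A := Subgroup.topologicalClosure_minimal _
    (by rwa [Subgroup.zpowers_le]) hA
  -- the compactness family
  let ι := {N : Subgroup G // ONS N}
  haveI : Nonempty ι := ⟨⟨⊤, ONS.top⟩⟩
  let s : ι → Set G := fun N => {z : G | z ∈ C ∧ (∃ k : ℕ, z ^ (p ^ k) ∈ N.1) ∧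
    (∃ m : ℕ, ¬ p ∣ m ∧ (z⁻¹ * g) ^ m ∈ N.1)}
  have hsclosed : ∀ N : ι, IsClosed (s N) := by
    intro N
    haveI := N.2.1
    haveI : DiscreteTopology (G ⧸ N.1) := QuotientGroup.discreteTopology N.2.2
    have : s N = (C : Set G) ∩ (fun z : G => (z : G ⧸ N.1)) ⁻¹'
        {qz : G ⧸ N.1 | (∃ k : ℕ, qz ^ (p ^ k) = 1) ∧
          (∃ m : ℕ, ¬ p ∣ m ∧ (qz⁻¹ * (g : G ⧸ N.1)) ^ m = 1)} := by
      ext z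
      simp only [Set.mem_setOf_eq, Set.mem_inter_iff, Set.mem_preimage, SetLike.mem_coe]
      refine and_congr Iff.rfl (and_congr ?_ ?_)
      · refine exists_congr fun k => ?_
        rw [pow_mem_iff_quot]
      · refine exists_congr fun m => and_congr Iff.rfl ?_
        rw [pow_mem_iff_quot]
        simp [QuotientGroup.mk_mul, QuotientGroup.mk_inv]
    rw [this]
    have hCc : IsClosed (C : Set G) := by
      rw [hC]; exact Subgroup.isClosed_topologicalClosure _
    refine hCc.inter (IsClosed.preimage QuotientGroup.continuous_mk ?_)
    exact isClosed_discrete _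
  have hsne : ∀ N : ι, (s N).Nonempty := by
    intro N
    haveI := N.2.1
    haveI : Finite (G ⧸ N.1) := Subgroup.quotient_finite_of_isOpen _ N.2.2
    set gb : G ⧸ N.1 := (g : G ⧸ N.1) with hgb
    set n : ℕ := orderOf gb with hn
    have hn0 : n ≠ 0 := (orderOf_pos gb).ne'
    set a : ℕ := n.factorization p with ha
    have hco : Nat.Coprime (p ^ a) (n / p ^ a) :=
      Nat.Coprime.pow_left a (Nat.coprime_ordCompl hp hn0)
    obtain ⟨eN, he1, he0⟩ := Nat.chineseRemainder hco 1 0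
    refine ⟨g ^ eN, pow_mem hgC eN, ⟨a, ?_⟩, ⟨n / p ^ a, Nat.not_dvd_ordCompl hp hn0, ?_⟩⟩
    · rw [← pow_mul, pow_mem_iff_quot, ← hgb]
      rw [← orderOf_dvd_iff_pow_eq_one, ← hn]
      have h1 : (n / p ^ a) ∣ eN := Nat.modEq_zero_iff_dvd.mp he0
      calc n = p ^ a * (n / p ^ a) := (Nat.ordProj_mul_ordCompl_eq_self n p).symm
        _ ∣ p ^ a * eN := mul_dvd_mul_left _ h1
        _ ∣ eN * p ^ a := by rw [mul_comm]
    · rw [pow_mem_iff_quot]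
      have hcast : (((g ^ eN)⁻¹ * g : G) : G ⧸ N.1) = gb ^ ((1 : ℤ) - eN) := by
        rw [QuotientGroup.mk_mul, QuotientGroup.mk_inv, QuotientGroup.mk_pow, ← hgb]
        rw [zpow_sub, zpow_one, zpow_natCast]
        group
      rw [hcast, ← zpow_natCast, ← zpow_mul, ← orderOf_dvd_iff_zpow_eq_one, ← hn]
      have h2 : ((p ^ a : ℕ) : ℤ) ∣ 1 - (eN : ℤ) := by
        have := he1.dvd
        simpa using this
      obtain ⟨t, ht⟩ := h2
      have : ((1 : ℤ) - eN) * (n / p ^ a : ℕ) = ((p ^ a : ℕ) : ℤ) * t * (n / p ^ a : ℕ) := by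
        rw [← ht]
      rw [this]
      have hfact : (n : ℤ) = ((p ^ a : ℕ) : ℤ) * ((n / p ^ a : ℕ) : ℤ) := by
        rw [← Nat.cast_mul, Nat.ordProj_mul_ordCompl_eq_self n p]
      rw [hfact]
      ring_nf
      exact ⟨t, by ring⟩
  have hdir : Directed (· ⊇ ·) s := by
    intro N M
    refine ⟨⟨N.1 ⊓ M.1, N.2.inf M.2⟩, ?_, ?_⟩
    · rintro z ⟨hz1, ⟨k, hk⟩, ⟨m, hm, hmm⟩⟩
      exact ⟨hz1, ⟨k, (Subgroup.mem_inf.mp hk).1⟩, ⟨m, hm, (Subgroup.mem_inf.mp hmm).1⟩⟩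
    · rintro z ⟨hz1, ⟨k, hk⟩, ⟨m, hm, hmm⟩⟩
      exact ⟨hz1, ⟨k, (Subgroup.mem_inf.mp hk).2⟩, ⟨m, hm, (Subgroup.mem_inf.mp hmm).2⟩⟩
  obtain ⟨x, hx⟩ := IsCompact.nonempty_iInter_of_directed_nonempty_isCompact_isClosed
    s hdir hsne (fun N => (hsclosed N).isCompact) hsclosed
  have hxall : ∀ N : ι, x ∈ s N := fun N => Set.mem_iInter.mp hx N
  have hxC : x ∈ C := (hxall ⟨⊤, ONS.top⟩).1
  refine ⟨x, hCA hxC, ?_, ?_⟩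
  · intro hx1
    obtain ⟨m, hm, hmm⟩ := (hxall ⟨N₀, hONS⟩).2.2
    rw [hx1] at hmm
    simp only [inv_one, one_mul] at hmm
    exact hm ((hchar m).mp hmm)
  · intro N hN
    exact (hxall ⟨N, hN⟩).2.1


section ProP
variable {p : ℕ} {x : G} (hp : p.Prime) (hx1 : x ≠ 1)
  (hxp : ∀ N : Subgroup G, ONS N → ∃ k : ℕ, x ^ (p ^ k) ∈ N)

include hp hx1 hxp in
/-- powers `x^d`, `0 < d < p`, avoid the Frattini-type subgroup. -/
theorem pow_not_mem_frattini {d : ℕ} (hd0 : 0 < d) (hdp : d < p) :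
    x ^ d ∉ (Subgroup.zpowers (x ^ p)).topologicalClosure := by
  intro hmem
  obtain ⟨N₁, hN₁, hxN₁⟩ := exists_ons_not_mem hx1
  haveI := hN₁.1
  set q : G ⧸ N₁ := (x : G ⧸ N₁) with hq
  obtain ⟨k₀, hk₀⟩ := hxp N₁ hN₁
  have hqord : q ^ (p ^ k₀) = 1 := by
    rw [hq, ← QuotientGroup.mk_pow, QuotientGroup.eq_one_iff]
    exact hk₀
  have hmem2 : x ^ d ∈ Subgroup.zpowers (x ^ p) ⊔ N₁ :=
    topologicalClosure_le_sup hN₁.1 hN₁.2 hmem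
  obtain ⟨j, hj⟩ := exists_zpow_of_mem_sup hmem2
  -- hj : ↑(x^d) = (↑(x^p))^j
  have hj' : q ^ (d : ℤ) = q ^ ((p : ℤ) * j) := by
    have h1 : ((x ^ d : G) : G ⧸ N₁) = q ^ (d : ℤ) := by
      rw [hq, ← QuotientGroup.mk_zpow, zpow_natCast]
    have h2 : ((x ^ p : G) : G ⧸ N₁) = q ^ (p : ℤ) := by
      rw [hq, ← QuotientGroup.mk_zpow, zpow_natCast]
    rw [h1, h2, ← zpow_mul] at hj
    exact hj
  have hdvd : ((orderOf q : ℕ) : ℤ) ∣ (d : ℤ) - (p : ℤ) * j := by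
    rw [orderOf_dvd_iff_zpow_eq_one, zpow_sub, hj']
    group
  have hqne : q ≠ 1 := by
    rw [hq, Ne, QuotientGroup.eq_one_iff]
    exact hxN₁
  obtain ⟨k, hkk, hoq⟩ := (Nat.dvd_prime_pow hp).mp
    (orderOf_dvd_iff_pow_eq_one.mpr hqord)
  have hk1 : 1 ≤ k := by
    rcases Nat.eq_zero_or_pos k with h | h
    · exfalso; apply hqne
      rw [← orderOf_eq_one_iff, hoq, h, pow_zero]
    · exact h
  have hpdvd : (p : ℤ) ∣ (d : ℤ) := by
    have h1 : (p : ℤ) ∣ ((orderOf q : ℕ) : ℤ) := by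
      rw [hoq]
      exact_mod_cast dvd_pow_self (p : ℤ) (Nat.one_le_iff_ne_zero.mp hk1)
    have h2 : (p : ℤ) ∣ (d : ℤ) - (p : ℤ) * j := dvd_trans h1 hdvd
    have h3 : (p : ℤ) ∣ (p : ℤ) * j := Dvd.intro j rfl
    have := dvd_add h2 h3
    simpa using this
  have : p ∣ d := by exact_mod_cast hpdvd
  have := Nat.le_of_dvd hd0 this
  omega

include hp hx1 hxp in
/-- a closed proper subgroup of the procyclic pro-p group is inside the Frattini subgroup. -/
theorem proper_le_frattini {X : Subgroup G} (hXc : IsClosed (X : Set G))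
    (hle : X ≤ (Subgroup.zpowers x).topologicalClosure)
    (hne : X ≠ (Subgroup.zpowers x).topologicalClosure) :
    X ≤ (Subgroup.zpowers (x ^ p)).topologicalClosure := by
  by_cases hall : ∀ N : Subgroup G, ONS N → x ∈ X ⊔ N
  · exfalso
    apply hne
    have hxX : x ∈ X := mem_closed_of_forall_mem_sup hXc hall
    exact le_antisymm hle
      (Subgroup.topologicalClosure_minimal _ (by rwa [Subgroup.zpowers_le]) hXc)
  · push_neg at hall
    obtain ⟨N', hN', hxN'⟩ := hall
    intro z hz
    apply mem_closed_of_forall_mem_sup (Subgroup.isClosed_topologicalClosure _)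
    intro N hN
    set D : Subgroup G := N ⊓ N' with hD
    have hDons : ONS D := hN.inf hN'
    haveI := hDons.1
    set qx : G ⧸ D := (x : G ⧸ D) with hqx
    have hzD : z ∈ Subgroup.zpowers x ⊔ D :=
      topologicalClosure_le_sup hDons.1 hDons.2 (hle hz)
    obtain ⟨j, hj⟩ := exists_zpow_of_mem_sup hzD
    by_cases hpj : (p : ℤ) ∣ j
    · -- z lies in zpowers (x^p) ⊔ D ≤ goal
      obtain ⟨t, rfl⟩ := hpj
      have hxpD : ((x ^ p : G) : G ⧸ D) = qx ^ (p : ℤ) := by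
        rw [← zpow_natCast x p, QuotientGroup.mk_zpow, hqx]
      have hmk : (((x ^ p) ^ t : G) : G ⧸ D) = ((z : G ⧸ D)) := by
        rw [QuotientGroup.mk_zpow, hxpD, ← zpow_mul, hj]
      have hzsup : z ∈ Subgroup.zpowers (x ^ p) ⊔ D := by
        refine mem_sup_of_mem_mul hDons.1 (x := (x ^ p) ^ t) (Subgroup.zpow_mem _
          (Subgroup.mem_zpowers _) t) ?_
        rw [← QuotientGroup.eq]
        exact hmk
      have hfin : Subgroup.zpowers (x ^ p) ⊔ D ≤
          (Subgroup.zpowers (x ^ p)).topologicalClosure ⊔ N :=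
        sup_le_sup (Subgroup.le_topologicalClosure _) inf_le_left
      exact hfin hzsup
    · -- impossible: x would be recovered in X ⊔ N'
      exfalso
      obtain ⟨k₀, hk₀⟩ := hxp D hDons
      have hqord : qx ^ ((p : ℤ) ^ k₀) = 1 := by
        rw [hqx, ← QuotientGroup.mk_zpow, QuotientGroup.eq_one_iff]
        have : x ^ ((p : ℤ) ^ k₀) = x ^ ((p ^ k₀ : ℕ) : ℤ) := by norm_cast
        rw [this, zpow_natCast]
        exact hk₀
      have hco : IsCoprime ((p : ℤ) ^ k₀) j :=
        IsCoprime.pow_left (((Nat.prime_iff_prime_int.mp hp).coprime_iff_not_dvd).mpr hpj)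
      obtain ⟨u, v, huv⟩ := hco
      have hqx_rec : qx = ((z : G ⧸ D)) ^ v := by
        calc qx = qx ^ (1 : ℤ) := (zpow_one qx).symm
          _ = qx ^ (u * (p : ℤ) ^ k₀ + v * j) := by rw [huv]
          _ = (qx ^ ((p : ℤ) ^ k₀)) ^ u * (qx ^ j) ^ v := by
              rw [zpow_add, mul_comm u ((p : ℤ) ^ k₀), mul_comm v j, zpow_mul, zpow_mul]
          _ = ((z : G ⧸ D)) ^ v := by rw [hqord, one_zpow, one_mul, ← hj]
      have hxXD : x ∈ X ⊔ D := by
        refine mem_sup_of_mem_mul hDons.1 (x := z ^ v) (Subgroup.zpow_mem _ hz v) ?_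
        rw [← QuotientGroup.eq]
        rw [← QuotientGroup.mk_zpow] at hqx_rec
        exact hqx_rec.symm
      have : x ∈ X ⊔ N' := (sup_le_sup_left (inf_le_right : D ≤ N') X) hxXD
      exact hxN' this

end ProP

section ForwardBasics

theorem csg_coe_sup (X Y : CSG G) (hc : ∀ a ∈ X.1, ∀ b ∈ Y.1, a * b = b * a) :
    (X ⊔ Y).1 = mulSG X.1 Y.1 hc := by
  have hW : IsClosed ((mulSG X.1 Y.1 hc : Subgroup G) : Set G) := isClosed_mulSG X.2 Y.2 hc
  have h1 : X ⊔ Y ≤ ⟨mulSG X.1 Y.1 hc, hW⟩ := sup_le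
    (csg_le_iff.mpr fun a ha => ⟨a, ha, 1, one_mem _, mul_one a⟩)
    (csg_le_iff.mpr fun b hb => ⟨1, one_mem _, b, hb, one_mul b⟩)
  have h2 : mulSG X.1 Y.1 hc ≤ (X ⊔ Y).1 := by
    rintro z ⟨a, ha, b, hb, rfl⟩
    exact mul_mem (csg_le_iff.mp (le_sup_left : X ≤ X ⊔ Y) ha)
      (csg_le_iff.mp (le_sup_right : Y ≤ X ⊔ Y) hb)
  exact le_antisymm (csg_le_iff.mp h1) h2

theorem mem_csg_sup {X Y : CSG G} {hc : ∀ a ∈ X.1, ∀ b ∈ Y.1, a * b = b * a} {z : G} :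
    z ∈ (X ⊔ Y).1 ↔ ∃ a ∈ X.1, ∃ b ∈ Y.1, a * b = z := by
  rw [csg_coe_sup X Y hc]
  exact mem_mulSG

variable {A' B' : Type u} [PartialOrder A'] [PartialOrder B']

/-- every element decomposes along the two lattice factors -/
theorem exists_decomp (e : CSG G ≃o A' × B') (g : G) :
    ∃ u ∈ (aEl e).1, ∃ v ∈ (bEl e).1, Commute u v ∧ u * v = g := by
  set Cg : CSG G := ⟨(Subgroup.zpowers g).topologicalClosure,
    Subgroup.isClosed_topologicalClosure _⟩ with hCg
  have hgC : g ∈ Cg.1 := Subgroup.le_topologicalClosure _ (Subgroup.mem_zpowers g)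
  have hcomm := closure_zpowers_comm g
  have hUC : (Cg ⊓ aEl e).1 ≤ Cg.1 := by rw [csg_coe_inf]; exact inf_le_left
  have hVC : (Cg ⊓ bEl e).1 ≤ Cg.1 := by rw [csg_coe_inf]; exact inf_le_left
  have hc : ∀ a ∈ (Cg ⊓ aEl e).1, ∀ b ∈ (Cg ⊓ bEl e).1, a * b = b * a :=
    fun a ha b hb => hcomm a (hUC ha) b (hVC hb)
  have hsup : (Cg ⊓ aEl e) ⊔ (Cg ⊓ bEl e) = Cg := decomp e Cg
  have hgC2 : g ∈ ((Cg ⊓ aEl e) ⊔ (Cg ⊓ bEl e)).1 := by rw [hsup]; exact hgC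
  obtain ⟨u, hu, v, hv, huv⟩ := (mem_csg_sup (hc := hc)).mp hgC2
  refine ⟨u, ?_, v, ?_, ?_, huv⟩
  · have := hu; rw [csg_coe_inf] at this; exact this.2
  · have := hv; rw [csg_coe_inf] at this; exact this.2
  · exact hcomm u (hUC hu) v (hVC hv)

theorem aEl_val_mul_bEl_val (e : CSG G ≃o A' × B') :
    ((aEl e).1 : Set G) * ((bEl e).1 : Set G) = Set.univ := by
  refine Set.eq_univ_iff_forall.mpr fun g => ?_
  obtain ⟨u, hu, v, hv, -, huv⟩ := exists_decomp e g
  exact ⟨u, hu, v, hv, huv⟩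

theorem aEl_val_inf_bEl_val (e : CSG G ≃o A' × B') :
    (aEl e).1 ⊓ (bEl e).1 = ⊥ := by
  have h := inf_aEl_bEl e
  have := congrArg Subtype.val h
  rwa [csg_coe_inf, csg_coe_bot] at this

theorem aEl_val_ne_bot (e : CSG G ≃o A' × B') [Nontrivial A'] [Nonempty B'] :
    (aEl e).1 ≠ ⊥ := by
  intro h
  apply aEl_ne_bot e
  apply Subtype.ext
  rw [csg_coe_bot, h]

theorem bEl_val_ne_bot (e : CSG G ≃o A' × B') [Nontrivial B'] [Nonempty A'] :
    (bEl e).1 ≠ ⊥ := by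
  intro h
  apply bEl_ne_bot e
  apply Subtype.ext
  rw [csg_coe_bot, h]

end ForwardBasics

section PiDisjoint
variable {A' B' : Type u} [PartialOrder A'] [PartialOrder B']

theorem piStar_disjoint (e : CSG G ≃o A' × B') :
    piStar ↥((aEl e).1) ∩ piStar ↥((bEl e).1) = ∅ := by
  by_contra hne
  obtain ⟨p, hpA, hpB⟩ := Set.nonempty_iff_ne_empty.mpr hne
  have hp : p.Prime := hpA.1
  obtain ⟨x, hxA, hx1, hxp⟩ := exists_pro_p_element (aEl e).2 hp hpA
  obtain ⟨y, hyB, hy1, hyp⟩ := exists_pro_p_element (bEl e).2 hp hpB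
  set P : CSG G := ⟨(Subgroup.zpowers x).topologicalClosure,
    Subgroup.isClosed_topologicalClosure _⟩ with hPdef
  set P₁ : CSG G := ⟨(Subgroup.zpowers (x ^ p)).topologicalClosure,
    Subgroup.isClosed_topologicalClosure _⟩ with hP₁def
  set Q : CSG G := ⟨(Subgroup.zpowers y).topologicalClosure,
    Subgroup.isClosed_topologicalClosure _⟩ with hQdef
  set Q₁ : CSG G := ⟨(Subgroup.zpowers (y ^ p)).topologicalClosure,
    Subgroup.isClosed_topologicalClosure _⟩ with hQ₁def
  have hxP : x ∈ P.1 := Subgroup.le_topologicalClosure _ (Subgroup.mem_zpowers x)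
  have hyQ : y ∈ Q.1 := Subgroup.le_topologicalClosure _ (Subgroup.mem_zpowers y)
  have hPa : P ≤ aEl e := csg_le_iff.mpr
    (Subgroup.topologicalClosure_minimal _ (by rwa [Subgroup.zpowers_le]) (aEl e).2)
  have hQb : Q ≤ bEl e := csg_le_iff.mpr
    (Subgroup.topologicalClosure_minimal _ (by rwa [Subgroup.zpowers_le]) (bEl e).2)
  have hP₁P : P₁ ≤ P := csg_le_iff.mpr
    (Subgroup.topologicalClosure_minimal _
      (by rw [Subgroup.zpowers_le]; exact pow_mem hxP p) P.2)
  have hQ₁Q : Q₁ ≤ Q := csg_le_iff.mpr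
    (Subgroup.topologicalClosure_minimal _
      (by rw [Subgroup.zpowers_le]; exact pow_mem hyQ p) Q.2)
  have hxnotP₁ : x ∉ P₁.1 := by
    have := pow_not_mem_frattini (x := x) hp hx1 hxp (d := 1) one_pos hp.one_lt
    rwa [pow_one] at this
  have hynotQ₁ : y ∉ Q₁.1 := by
    have := pow_not_mem_frattini (x := y) hp hy1 hyp (d := 1) one_pos hp.one_lt
    rwa [pow_one] at this
  have hPprop : ∀ W : CSG G, W ≤ P → W = P ∨ W ≤ P₁ := by
    intro W hW
    rcases eq_or_ne W P with h | h
    · exact Or.inl h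
    · refine Or.inr (csg_le_iff.mpr ?_)
      exact proper_le_frattini hp hx1 hxp W.2 (csg_le_iff.mp hW)
        (fun hval => h (Subtype.ext hval))
  have hQprop : ∀ W : CSG G, W ≤ Q → W = Q ∨ W ≤ Q₁ := by
    intro W hW
    rcases eq_or_ne W Q with h | h
    · exact Or.inl h
    · refine Or.inr (csg_le_iff.mpr ?_)
      exact proper_le_frattini hp hy1 hyp W.2 (csg_le_iff.mp hW)
        (fun hval => h (Subtype.ext hval))
  set R : CSG G := P ⊔ Q with hRdef
  set M₁ : CSG G := P₁ ⊔ Q with hM₁def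
  set M₂ : CSG G := P ⊔ Q₁ with hM₂def
  set T : CSG G := P₁ ⊔ Q₁ with hTdef
  have hPR : P ≤ R := le_sup_left
  have hQR : Q ≤ R := le_sup_right
  have hM₁R : M₁ ≤ R := sup_le (hP₁P.trans hPR) hQR
  have hM₂R : M₂ ≤ R := sup_le hPR (hQ₁Q.trans hQR)
  have hTR : T ≤ R := sup_le (hP₁P.trans hPR) (hQ₁Q.trans hQR)
  have hPM₁ : P ⊓ M₁ = P₁ := nested_inf e hP₁P hPa hQb
  have hQM₂ : Q ⊓ M₂ = Q₁ := nested_inf' e hQ₁Q hQb hPa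
  have hPQtriv : ∀ w : G, w ∈ P.1 → w ∈ Q.1 → w = 1 := by
    intro w h1 h2
    have hPQbot : P ⊓ Q = ⊥ := le_antisymm
      ((inf_le_inf hPa hQb).trans (le_of_eq (inf_aEl_bEl e))) bot_le
    have : w ∈ (P ⊓ Q).1 := by rw [csg_coe_inf]; exact ⟨h1, h2⟩
    rw [hPQbot, csg_coe_bot, Subgroup.mem_bot] at this
    exact this
  have hxnotM₁ : x ∉ M₁.1 := by
    intro h
    apply hxnotP₁
    have : x ∈ (P ⊓ M₁).1 := by rw [csg_coe_inf]; exact ⟨hxP, h⟩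
    rwa [hPM₁] at this
  have hynotM₂ : y ∉ M₂.1 := by
    intro h
    apply hynotQ₁
    have : y ∈ (Q ⊓ M₂).1 := by rw [csg_coe_inf]; exact ⟨hyQ, h⟩
    rwa [hQM₂] at this
  have hcover : ∀ W : CSG G, W ≤ R → W ≠ R → W ≤ M₁ ∨ W ≤ M₂ := by
    intro W hW hWne
    have hdecW : W = (W ⊓ P) ⊔ (W ⊓ Q) := le_decomp e hPa hQb hW
    rcases hPprop (W ⊓ P) inf_le_right with h1 | h1
    · rcases hQprop (W ⊓ Q) inf_le_right with h2 | h2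
      · exfalso
        apply hWne
        rw [hdecW, h1, h2]
      · right
        rw [hdecW]
        exact sup_le (inf_le_right.trans le_sup_left) (h2.trans le_sup_right)
    · left
      rw [hdecW]
      exact sup_le (h1.trans le_sup_left) (inf_le_right.trans le_sup_right)
  have hxR : x ∈ R.1 := csg_le_iff.mp hPR hxP
  have hyR : y ∈ R.1 := csg_le_iff.mp hQR hyQ
  have hxyR : x * y ∈ R.1 := mul_mem hxR hyR
  -- R is topologically generated by a single element, hence abelian
  have hgen : ∃ g ∈ R.1, (Subgroup.zpowers g).topologicalClosure = R.1 := by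
    by_contra hno
    push_neg at hno
    have hsubset : (R.1 : Set G) ⊆ (M₁.1 : Set G) ∪ (M₂.1 : Set G) := by
      intro g hg
      set Cg : CSG G := ⟨(Subgroup.zpowers g).topologicalClosure,
        Subgroup.isClosed_topologicalClosure _⟩ with hCgdef
      have hCgR : Cg ≤ R := csg_le_iff.mpr
        (Subgroup.topologicalClosure_minimal _ (by rwa [Subgroup.zpowers_le]) R.2)
      have hCgne : Cg ≠ R := by
        intro h
        exact hno g hg (congrArg Subtype.val h)
      have hgCg : g ∈ Cg.1 := Subgroup.le_topologicalClosure _ (Subgroup.mem_zpowers g)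
      rcases hcover Cg hCgR hCgne with h | h
      · exact Or.inl (csg_le_iff.mp h hgCg)
      · exact Or.inr (csg_le_iff.mp h hgCg)
    rcases hsubset hxyR with h | h
    · apply hxnotM₁
      have hyM₁ : y ∈ M₁.1 := csg_le_iff.mp (le_sup_right : Q ≤ M₁) hyQ
      have := mul_mem h (inv_mem hyM₁)
      simpa using this
    · apply hynotM₂
      have hxM₂ : x ∈ M₂.1 := csg_le_iff.mp (le_sup_left : P ≤ M₂) hxP
      have := mul_mem (inv_mem hxM₂) h
      simpa using this
  obtain ⟨g, hgR, hgtop⟩ := hgen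
  have hRcomm : ∀ u ∈ R.1, ∀ v ∈ R.1, u * v = v * u := by
    intro u hu v hv
    rw [← hgtop] at hu hv
    exact closure_zpowers_comm g u hu v hv
  have c : Commute x y := hRcomm x hxR y hyR
  -- submembership helpers
  have hP₁Psub : P₁.1 ≤ P.1 := csg_le_iff.mp hP₁P
  have hQ₁Qsub : Q₁.1 ≤ Q.1 := csg_le_iff.mp hQ₁Q
  have hP₁R : P₁.1 ≤ R.1 := csg_le_iff.mp (hP₁P.trans hPR)
  have hQ₁R : Q₁.1 ≤ R.1 := csg_le_iff.mp (hQ₁Q.trans hQR)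
  have hcT : ∀ a ∈ P₁.1, ∀ b ∈ Q₁.1, a * b = b * a :=
    fun a ha b hb => hRcomm a (hP₁R ha) b (hQ₁R hb)
  have hTcoe : T.1 = mulSG P₁.1 Q₁.1 hcT := csg_coe_sup P₁ Q₁ hcT
  have hTsubR : T.1 ≤ R.1 := csg_le_iff.mp hTR
  -- the closed subgroup generated by x*y
  set Cxy : CSG G := ⟨(Subgroup.zpowers (x * y)).topologicalClosure,
    Subgroup.isClosed_topologicalClosure _⟩ with hCxydef
  have hCxyR : Cxy ≤ R := csg_le_iff.mpr
    (Subgroup.topologicalClosure_minimal _ (by rwa [Subgroup.zpowers_le]) R.2)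
  have hxyCxy : x * y ∈ Cxy.1 := Subgroup.le_topologicalClosure _ (Subgroup.mem_zpowers _)
  set Z : CSG G := T ⊔ Cxy with hZdef
  have hTZ : T ≤ Z := le_sup_left
  have hZR : Z ≤ R := sup_le hTR hCxyR
  have hxyZ : x * y ∈ Z.1 := csg_le_iff.mp (le_sup_right : Cxy ≤ Z) hxyCxy
  -- coset covering of Z
  set D : Set G := ⋃ k ∈ Finset.range p,
    (fun w : G => (x ^ (k : ℤ) * y ^ (k : ℤ))⁻¹ * w) ⁻¹' (T.1 : Set G) with hDdef
  have hDclosed : IsClosed D := by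
    apply Set.Finite.isClosed_biUnion (Finset.finite_toSet _)
    intro k _
    exact T.2.preimage (continuous_const.mul continuous_id)
  have hmemD : ∀ w : G,
      w ∈ D ↔ ∃ k : ℕ, k < p ∧ (x ^ (k : ℤ) * y ^ (k : ℤ))⁻¹ * w ∈ T.1 := by
    intro w
    simp only [hDdef, Set.mem_iUnion, Set.mem_preimage, Finset.mem_range, SetLike.mem_coe,
      exists_prop]
  have hxx : ∀ (a : G) (j kz : ℤ), (a ^ kz)⁻¹ * a ^ j = a ^ (j - kz) := by
    intro a j kz
    rw [← zpow_neg, ← zpow_add]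
    congr 1
    ring
  have hzxD : (Subgroup.zpowers (x * y) : Set G) ⊆ D := by
    rintro w hw
    obtain ⟨j, hj⟩ := Subgroup.mem_zpowers_iff.mp hw
    set k : ℕ := (j % (p : ℤ)).toNat with hkdef
    have hppos : (0 : ℤ) < (p : ℤ) := by exact_mod_cast hp.pos
    have hk : (k : ℤ) = j % (p : ℤ) := Int.toNat_of_nonneg (Int.emod_nonneg j hppos.ne')
    have hklt : k < p := by
      have := Int.emod_lt_of_pos j hppos
      omega
    rw [hmemD]
    refine ⟨k, hklt, ?_⟩
    have e1 : (x ^ (k : ℤ) * y ^ (k : ℤ))⁻¹ * (x * y) ^ j =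
        (y ^ (k : ℤ))⁻¹ * ((x ^ (k : ℤ))⁻¹ * x ^ j) * y ^ j := by
      rw [c.mul_zpow]
      group
    have e2 : (y ^ (k : ℤ))⁻¹ * x ^ (j - (k : ℤ)) * y ^ j =
        x ^ (j - (k : ℤ)) * y ^ (j - (k : ℤ)) := by
      have hsw : Commute (x ^ (j - (k : ℤ))) ((y ^ (k : ℤ))⁻¹) :=
        ((c.zpow_zpow (j - (k : ℤ)) (k : ℤ))).inv_right
      rw [← hsw.eq, mul_assoc, hxx y j (k : ℤ)]
    have hxmem : x ^ (j - (k : ℤ)) ∈ P₁.1 := by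
      have hs : j - (k : ℤ) = (p : ℤ) * (j / (p : ℤ)) := by
        have := Int.mul_ediv_add_emod j (p : ℤ)
        omega
      rw [hs, zpow_mul, zpow_natCast x p]
      exact Subgroup.le_topologicalClosure _
        (Subgroup.zpow_mem _ (Subgroup.mem_zpowers _) _)
    have hymem : y ^ (j - (k : ℤ)) ∈ Q₁.1 := by
      have hs : j - (k : ℤ) = (p : ℤ) * (j / (p : ℤ)) := by
        have := Int.mul_ediv_add_emod j (p : ℤ)
        omega
      rw [hs, zpow_mul, zpow_natCast y p]
      exact Subgroup.le_topologicalClosure _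
        (Subgroup.zpow_mem _ (Subgroup.mem_zpowers _) _)
    rw [← hj, e1, hxx x j (k : ℤ), e2, hTcoe]
    exact ⟨_, hxmem, _, hymem, rfl⟩
  have hCxyD : (Cxy.1 : Set G) ⊆ D := by
    have : (Cxy.1 : Set G) = closure ((Subgroup.zpowers (x * y) : Set G)) := rfl
    rw [this]
    exact closure_minimal hzxD hDclosed
  have hZD : (Z.1 : Set G) ⊆ D := by
    have hcZ : ∀ a ∈ T.1, ∀ b ∈ Cxy.1, a * b = b * a :=
      fun a ha b hb => hRcomm a (hTsubR ha) b (csg_le_iff.mp hCxyR hb)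
    intro w hw
    rw [SetLike.mem_coe, csg_coe_sup T Cxy hcZ] at hw
    obtain ⟨t, ht, cc, hcc, rfl⟩ := hw
    obtain ⟨k, hklt, hmem⟩ := (hmemD cc).mp (hCxyD hcc)
    rw [hmemD]
    refine ⟨k, hklt, ?_⟩
    have hxyk : x ^ (k : ℤ) * y ^ (k : ℤ) ∈ R.1 :=
      mul_mem (Subgroup.zpow_mem _ hxR _) (Subgroup.zpow_mem _ hyR _)
    have hre : (x ^ (k : ℤ) * y ^ (k : ℤ))⁻¹ * (t * cc) =
        t * ((x ^ (k : ℤ) * y ^ (k : ℤ))⁻¹ * cc) := by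
      have := hRcomm _ (inv_mem hxyk) t (hTsubR ht)
      rw [← mul_assoc, this, mul_assoc]
    rw [hre]
    exact mul_mem ht hmem
  -- interval classification
  have hZclass : Z = T ∨ Z = M₁ ∨ Z = M₂ ∨ Z = R := by
    have hdecZ : Z = (Z ⊓ P) ⊔ (Z ⊓ Q) := le_decomp e hPa hQb hZR
    have hZP : Z ⊓ P = P₁ ∨ Z ⊓ P = P := by
      rcases hPprop (Z ⊓ P) inf_le_right with h | h
      · exact Or.inr h
      · left
        refine le_antisymm h (le_inf ?_ hP₁P)
        exact (le_sup_left : P₁ ≤ T).trans hTZ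
    have hZQ : Z ⊓ Q = Q₁ ∨ Z ⊓ Q = Q := by
      rcases hQprop (Z ⊓ Q) inf_le_right with h | h
      · exact Or.inr h
      · left
        refine le_antisymm h (le_inf ?_ hQ₁Q)
        exact (le_sup_right : Q₁ ≤ T).trans hTZ
    rcases hZP with h1 | h1 <;> rcases hZQ with h2 | h2
    · exact Or.inl (by rw [hdecZ, h1, h2])
    · exact Or.inr (Or.inl (by rw [hdecZ, h1, h2]))
    · exact Or.inr (Or.inr (Or.inl (by rw [hdecZ, h1, h2])))
    · exact Or.inr (Or.inr (Or.inr (by rw [hdecZ, h1, h2])))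
  -- now exclude all four cases
  rcases hZclass with hZc | hZc | hZc | hZc
  · -- Z = T : then x*y ∈ T, forcing x ∈ P₁
    apply hxnotP₁
    have hxyT : x * y ∈ T.1 := by rw [← congrArg Subtype.val hZc]; exact hxyZ
    rw [hTcoe] at hxyT
    obtain ⟨p₁, hp₁, q₁, hq₁, heq⟩ := hxyT
    have h2 : p₁⁻¹ * x = q₁ * y⁻¹ := by
      have hq₁' : q₁ = p₁⁻¹ * (x * y) := by rw [← heq]; group
      rw [hq₁']; group
    have hmemP : p₁⁻¹ * x ∈ P.1 := mul_mem (inv_mem (hP₁Psub hp₁)) hxP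
    have hmemQ : p₁⁻¹ * x ∈ Q.1 := by rw [h2]; exact mul_mem (hQ₁Qsub hq₁) (inv_mem hyQ)
    have := hPQtriv _ hmemP hmemQ
    have hx_eq : x = p₁ := by
      have := congrArg (p₁ * ·) this
      simpa [mul_assoc] using this
    rw [hx_eq]
    exact hp₁
  · -- Z = M₁ : x*y ∈ M₁ and y ∈ M₁ gives x ∈ M₁
    apply hxnotM₁
    have hxyM₁ : x * y ∈ M₁.1 := by rw [← congrArg Subtype.val hZc]; exact hxyZ
    have hyM₁ : y ∈ M₁.1 := csg_le_iff.mp (le_sup_right : Q ≤ M₁) hyQ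
    have := mul_mem hxyM₁ (inv_mem hyM₁)
    simpa using this
  · -- Z = M₂ : x*y ∈ M₂ and x ∈ M₂ gives y ∈ M₂
    apply hynotM₂
    have hxyM₂ : x * y ∈ M₂.1 := by rw [← congrArg Subtype.val hZc]; exact hxyZ
    have hxM₂ : x ∈ M₂.1 := csg_le_iff.mp (le_sup_left : P ≤ M₂) hxP
    have := mul_mem (inv_mem hxM₂) hxyM₂
    simpa using this
  · -- Z = R : then x ∈ Z ⊆ D, contradiction
    have hxZ : x ∈ (Z.1 : Set G) := by
      rw [congrArg Subtype.val hZc]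
      exact hxR
    obtain ⟨k, hklt, hmem⟩ := (hmemD x).mp (hZD hxZ)
    rw [hTcoe] at hmem
    obtain ⟨p₁, hp₁, q₁, hq₁, heq⟩ := hmem
    have hq₁eq : q₁ = p₁⁻¹ * ((x ^ (k : ℤ) * y ^ (k : ℤ))⁻¹ * x) := by rw [← heq]; group
    have hkey : q₁ * y ^ (k : ℤ) = p₁⁻¹ * x ^ (1 - (k : ℤ)) := by
      rw [hq₁eq]
      have hsw : Commute (x ^ (1 - (k : ℤ))) (y ^ (-(k : ℤ))) :=
        c.zpow_zpow (1 - (k : ℤ)) (-(k : ℤ))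
      calc p₁⁻¹ * ((x ^ (k : ℤ) * y ^ (k : ℤ))⁻¹ * x) * y ^ (k : ℤ)
          = p₁⁻¹ * (y ^ (-(k : ℤ)) * (x ^ (1 - (k : ℤ)) * y ^ (k : ℤ))) := by
            group
        _ = p₁⁻¹ * (x ^ (1 - (k : ℤ)) * (y ^ (-(k : ℤ)) * y ^ (k : ℤ))) := by
            rw [← mul_assoc (y ^ (-(k : ℤ))), ← hsw.eq, mul_assoc]
        _ = p₁⁻¹ * x ^ (1 - (k : ℤ)) := by
            rw [← zpow_add]
            simp
    have hmemQ2 : q₁ * y ^ (k : ℤ) ∈ Q.1 := mul_mem (hQ₁Qsub hq₁) (Subgroup.zpow_mem _ hyQ _)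
    have hmemP2 : q₁ * y ^ (k : ℤ) ∈ P.1 := by
      rw [hkey]
      exact mul_mem (inv_mem (hP₁Psub hp₁)) (Subgroup.zpow_mem _ hxP _)
    have htriv := hPQtriv _ hmemP2 hmemQ2
    have hyk : y ^ (k : ℤ) = q₁⁻¹ := by
      have := congrArg (q₁⁻¹ * ·) htriv
      simpa [mul_assoc] using this
    rcases Nat.eq_zero_or_pos k with hk0 | hk0
    · -- k = 0 : x ∈ P₁
      apply hxnotP₁
      have := htriv
      rw [hkey, hk0] at this
      simp only [Nat.cast_zero, sub_zero, zpow_one] at this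
      have hx_eq : x = p₁ := by
        have := congrArg (p₁ * ·) this
        simpa [mul_assoc] using this
      rw [hx_eq]
      exact hp₁
    · -- k > 0 : y^k ∈ Q₁ with 0 < k < p
      have : y ^ k ∈ Q₁.1 := by
        have : y ^ (k : ℤ) ∈ Q₁.1 := by rw [hyk]; exact inv_mem hq₁
        rwa [zpow_natCast] at this
      exact pow_not_mem_frattini (x := y) hp hy1 hyp hk0 hklt this

end PiDisjoint

section Normality
variable {A' B' : Type u} [PartialOrder A'] [PartialOrder B']

theorem conj_mem_aEl (e : CSG G ≃o A' × B')
    (hpi : piStar ↥((aEl e).1) ∩ piStar ↥((bEl e).1) = ∅)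
    {v w : G} (hv : v ∈ (bEl e).1) (hw : w ∈ (aEl e).1) :
    v * w * v⁻¹ ∈ (aEl e).1 := by
  classical
  set Cw : CSG G := ⟨(Subgroup.zpowers w).topologicalClosure,
    Subgroup.isClosed_topologicalClosure _⟩ with hCwdef
  set Cv : CSG G := ⟨(Subgroup.zpowers v).topologicalClosure,
    Subgroup.isClosed_topologicalClosure _⟩ with hCvdef
  have hCwa : Cw ≤ aEl e := csg_le_iff.mpr
    (Subgroup.topologicalClosure_minimal _ (by rwa [Subgroup.zpowers_le]) (aEl e).2)
  have hCvb : Cv ≤ bEl e := csg_le_iff.mpr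
    (Subgroup.topologicalClosure_minimal _ (by rwa [Subgroup.zpowers_le]) (bEl e).2)
  set Dd : CSG G := Cw ⊔ Cv with hDddef
  have hwD : w ∈ Dd.1 := csg_le_iff.mp (le_sup_left : Cw ≤ Dd)
    (Subgroup.le_topologicalClosure _ (Subgroup.mem_zpowers w))
  have hvD : v ∈ Dd.1 := csg_le_iff.mp (le_sup_right : Cv ≤ Dd)
    (Subgroup.le_topologicalClosure _ (Subgroup.mem_zpowers v))
  set z : G := v * w * v⁻¹ with hzdef
  have hzD : z ∈ Dd.1 := mul_mem (mul_mem hvD hwD) (inv_mem hvD)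
  set Cz : CSG G := ⟨(Subgroup.zpowers z).topologicalClosure,
    Subgroup.isClosed_topologicalClosure _⟩ with hCzdef
  have hCzD : Cz ≤ Dd := csg_le_iff.mpr
    (Subgroup.topologicalClosure_minimal _ (by rwa [Subgroup.zpowers_le]) Dd.2)
  have hDa : Dd ⊓ aEl e = Cw := sup_proj_a e hCwa hCvb
  have hDb : Dd ⊓ bEl e = Cv := sup_proj_b e hCwa hCvb
  have hUa : (Cz ⊓ aEl e) ≤ Cw := by rw [← hDa]; exact inf_le_inf_right _ hCzD
  have hVb : (Cz ⊓ bEl e) ≤ Cv := by rw [← hDb]; exact inf_le_inf_right _ hCzD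
  have hCzcomm := closure_zpowers_comm z
  have hUC : (Cz ⊓ aEl e).1 ≤ Cz.1 := by rw [csg_coe_inf]; exact inf_le_left
  have hVC : (Cz ⊓ bEl e).1 ≤ Cz.1 := by rw [csg_coe_inf]; exact inf_le_left
  have hc : ∀ a ∈ (Cz ⊓ aEl e).1, ∀ b ∈ (Cz ⊓ bEl e).1, a * b = b * a :=
    fun a ha b hb => hCzcomm a (hUC ha) b (hVC hb)
  have hzC : z ∈ Cz.1 := Subgroup.le_topologicalClosure _ (Subgroup.mem_zpowers z)
  have hz2 : z ∈ ((Cz ⊓ aEl e) ⊔ (Cz ⊓ bEl e)).1 := by rw [decomp e Cz]; exact hzC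
  obtain ⟨u, hu, u', hu', huu'⟩ := (mem_csg_sup (hc := hc)).mp hz2
  have huCw : u ∈ Cw.1 := csg_le_iff.mp hUa hu
  have hu'Cv : u' ∈ Cv.1 := csg_le_iff.mp hVb hu'
  have huA : u ∈ (aEl e).1 := csg_le_iff.mp hCwa huCw
  have hu'B : u' ∈ (bEl e).1 := csg_le_iff.mp hCvb hu'Cv
  have hcomm_uu' : Commute u u' := hCzcomm u (hUC hu) u' (hVC hu')
  have hu'1 : u' = 1 := by
    apply eq_one_of_forall_mem
    intro N hN
    obtain ⟨hNn, hNo⟩ := hN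
    haveI := hNn
    haveI : Finite (G ⧸ N) := Subgroup.quotient_finite_of_isOpen N hNo
    set m₁ := orderOf ((u : G ⧸ N)) with hm₁
    set m₂ := orderOf ((u' : G ⧸ N)) with hm₂
    have hco : Nat.Coprime m₁ m₂ := by
      by_contra hco
      obtain ⟨r, hr, hrdvd⟩ := Nat.exists_prime_and_dvd hco
      have h1 : r ∈ piStar ↥((aEl e).1) := mem_piStar_of_dvd_orderOf hNo huA hr
        (hrdvd.trans (Nat.gcd_dvd_left _ _))
      have h2 : r ∈ piStar ↥((bEl e).1) := mem_piStar_of_dvd_orderOf hNo hu'B hr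
        (hrdvd.trans (Nat.gcd_dvd_right _ _))
      have hrr : r ∈ piStar ↥((aEl e).1) ∩ piStar ↥((bEl e).1) := ⟨h1, h2⟩
      rw [hpi] at hrr
      exact hrr
    have hcomm_q : Commute ((u : G ⧸ N)) ((u' : G ⧸ N)) :=
      hcomm_uu'.map (QuotientGroup.mk' N)
    have hordz : orderOf ((z : G ⧸ N)) = m₁ * m₂ := by
      have hzq : ((z : G ⧸ N)) = ((u : G ⧸ N)) * ((u' : G ⧸ N)) := by
        rw [← huu']
        rfl
      rw [hzq]
      exact hcomm_q.orderOf_mul_eq_mul_orderOf_of_coprime hco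
    have hordzw : orderOf ((z : G ⧸ N)) = orderOf ((w : G ⧸ N)) := by
      have hzq : ((z : G ⧸ N)) = (MulAut.conj ((v : G ⧸ N))) ((w : G ⧸ N)) := by
        rw [hzdef, MulAut.conj_apply]
        rfl
      rw [hzq]
      exact MulEquiv.orderOf_eq _ _
    have hm₂1 : m₂ = 1 := by
      by_contra hm₂ne
      obtain ⟨r, hr, hrdvd⟩ := Nat.exists_prime_and_dvd hm₂ne
      have hrw : r ∣ orderOf ((w : G ⧸ N)) := by
        rw [← hordzw, hordz]
        exact Dvd.dvd.mul_left hrdvd m₁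
      have h1 : r ∈ piStar ↥((aEl e).1) := mem_piStar_of_dvd_orderOf hNo hw hr hrw
      have h2 : r ∈ piStar ↥((bEl e).1) := mem_piStar_of_dvd_orderOf hNo hu'B hr hrdvd
      have hrr : r ∈ piStar ↥((aEl e).1) ∩ piStar ↥((bEl e).1) := ⟨h1, h2⟩
      rw [hpi] at hrr
      exact hrr
    have : ((u' : G ⧸ N)) = 1 := orderOf_eq_one_iff.mp hm₂1
    rwa [QuotientGroup.eq_one_iff] at this
  show v * w * v⁻¹ ∈ (aEl e).1
  have : v * w * v⁻¹ = u := by rw [← hzdef, ← huu', hu'1, mul_one]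
  rw [this]
  exact huA

theorem conj_mem_bEl (e : CSG G ≃o A' × B')
    (hpi : piStar ↥((aEl e).1) ∩ piStar ↥((bEl e).1) = ∅)
    {v w : G} (hv : v ∈ (aEl e).1) (hw : w ∈ (bEl e).1) :
    v * w * v⁻¹ ∈ (bEl e).1 := by
  classical
  set Cw : CSG G := ⟨(Subgroup.zpowers w).topologicalClosure,
    Subgroup.isClosed_topologicalClosure _⟩ with hCwdef
  set Cv : CSG G := ⟨(Subgroup.zpowers v).topologicalClosure,
    Subgroup.isClosed_topologicalClosure _⟩ with hCvdef
  have hCwb : Cw ≤ bEl e := csg_le_iff.mpr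
    (Subgroup.topologicalClosure_minimal _ (by rwa [Subgroup.zpowers_le]) (bEl e).2)
  have hCva : Cv ≤ aEl e := csg_le_iff.mpr
    (Subgroup.topologicalClosure_minimal _ (by rwa [Subgroup.zpowers_le]) (aEl e).2)
  set Dd : CSG G := Cv ⊔ Cw with hDddef
  have hwD : w ∈ Dd.1 := csg_le_iff.mp (le_sup_right : Cw ≤ Dd)
    (Subgroup.le_topologicalClosure _ (Subgroup.mem_zpowers w))
  have hvD : v ∈ Dd.1 := csg_le_iff.mp (le_sup_left : Cv ≤ Dd)
    (Subgroup.le_topologicalClosure _ (Subgroup.mem_zpowers v))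
  set z : G := v * w * v⁻¹ with hzdef
  have hzD : z ∈ Dd.1 := mul_mem (mul_mem hvD hwD) (inv_mem hvD)
  set Cz : CSG G := ⟨(Subgroup.zpowers z).topologicalClosure,
    Subgroup.isClosed_topologicalClosure _⟩ with hCzdef
  have hCzD : Cz ≤ Dd := csg_le_iff.mpr
    (Subgroup.topologicalClosure_minimal _ (by rwa [Subgroup.zpowers_le]) Dd.2)
  have hDa : Dd ⊓ aEl e = Cv := sup_proj_a e hCva hCwb
  have hDb : Dd ⊓ bEl e = Cw := sup_proj_b e hCva hCwb
  have hUa : (Cz ⊓ aEl e) ≤ Cv := by rw [← hDa]; exact inf_le_inf_right _ hCzD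
  have hVb : (Cz ⊓ bEl e) ≤ Cw := by rw [← hDb]; exact inf_le_inf_right _ hCzD
  have hCzcomm := closure_zpowers_comm z
  have hUC : (Cz ⊓ aEl e).1 ≤ Cz.1 := by rw [csg_coe_inf]; exact inf_le_left
  have hVC : (Cz ⊓ bEl e).1 ≤ Cz.1 := by rw [csg_coe_inf]; exact inf_le_left
  have hc : ∀ a ∈ (Cz ⊓ aEl e).1, ∀ b ∈ (Cz ⊓ bEl e).1, a * b = b * a :=
    fun a ha b hb => hCzcomm a (hUC ha) b (hVC hb)
  have hzC : z ∈ Cz.1 := Subgroup.le_topologicalClosure _ (Subgroup.mem_zpowers z)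
  have hz2 : z ∈ ((Cz ⊓ aEl e) ⊔ (Cz ⊓ bEl e)).1 := by rw [decomp e Cz]; exact hzC
  obtain ⟨u, hu, u', hu', huu'⟩ := (mem_csg_sup (hc := hc)).mp hz2
  have huCv : u ∈ Cv.1 := csg_le_iff.mp hUa hu
  have hu'Cw : u' ∈ Cw.1 := csg_le_iff.mp hVb hu'
  have huA : u ∈ (aEl e).1 := csg_le_iff.mp hCva huCv
  have hu'B : u' ∈ (bEl e).1 := csg_le_iff.mp hCwb hu'Cw
  have hcomm_uu' : Commute u u' := hCzcomm u (hUC hu) u' (hVC hu')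
  have hu1 : u = 1 := by
    apply eq_one_of_forall_mem
    intro N hN
    obtain ⟨hNn, hNo⟩ := hN
    haveI := hNn
    haveI : Finite (G ⧸ N) := Subgroup.quotient_finite_of_isOpen N hNo
    set m₁ := orderOf ((u : G ⧸ N)) with hm₁
    set m₂ := orderOf ((u' : G ⧸ N)) with hm₂
    have hco : Nat.Coprime m₁ m₂ := by
      by_contra hco
      obtain ⟨r, hr, hrdvd⟩ := Nat.exists_prime_and_dvd hco
      have h1 : r ∈ piStar ↥((aEl e).1) := mem_piStar_of_dvd_orderOf hNo huA hr
        (hrdvd.trans (Nat.gcd_dvd_left _ _))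
      have h2 : r ∈ piStar ↥((bEl e).1) := mem_piStar_of_dvd_orderOf hNo hu'B hr
        (hrdvd.trans (Nat.gcd_dvd_right _ _))
      have hrr : r ∈ piStar ↥((aEl e).1) ∩ piStar ↥((bEl e).1) := ⟨h1, h2⟩
      rw [hpi] at hrr
      exact hrr
    have hcomm_q : Commute ((u : G ⧸ N)) ((u' : G ⧸ N)) :=
      hcomm_uu'.map (QuotientGroup.mk' N)
    have hordz : orderOf ((z : G ⧸ N)) = m₁ * m₂ := by
      have hzq : ((z : G ⧸ N)) = ((u : G ⧸ N)) * ((u' : G ⧸ N)) := by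
        rw [← huu']
        rfl
      rw [hzq]
      exact hcomm_q.orderOf_mul_eq_mul_orderOf_of_coprime hco
    have hordzw : orderOf ((z : G ⧸ N)) = orderOf ((w : G ⧸ N)) := by
      have hzq : ((z : G ⧸ N)) = (MulAut.conj ((v : G ⧸ N))) ((w : G ⧸ N)) := by
        rw [hzdef, MulAut.conj_apply]
        rfl
      rw [hzq]
      exact MulEquiv.orderOf_eq _ _
    have hm₁1 : m₁ = 1 := by
      by_contra hm₁ne
      obtain ⟨r, hr, hrdvd⟩ := Nat.exists_prime_and_dvd hm₁ne
      have hrw : r ∣ orderOf ((w : G ⧸ N)) := by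
        rw [← hordzw, hordz]
        exact Dvd.dvd.mul_right hrdvd m₂
      have h1 : r ∈ piStar ↥((bEl e).1) := mem_piStar_of_dvd_orderOf hNo hw hr hrw
      have h2 : r ∈ piStar ↥((aEl e).1) := mem_piStar_of_dvd_orderOf hNo huA hr hrdvd
      have hrr : r ∈ piStar ↥((aEl e).1) ∩ piStar ↥((bEl e).1) := ⟨h2, h1⟩
      rw [hpi] at hrr
      exact hrr
    have : ((u : G ⧸ N)) = 1 := orderOf_eq_one_iff.mp hm₁1
    rwa [QuotientGroup.eq_one_iff] at this
  show v * w * v⁻¹ ∈ (bEl e).1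
  have : v * w * v⁻¹ = u' := by rw [← hzdef, ← huu', hu1, one_mul]
  rw [this]
  exact hu'B

theorem aEl_val_normal (e : CSG G ≃o A' × B')
    (hpi : piStar ↥((aEl e).1) ∩ piStar ↥((bEl e).1) = ∅) : ((aEl e).1).Normal := by
  constructor
  intro w hw g
  obtain ⟨u, hu, v, hv, -, rfl⟩ := exists_decomp e g
  have h1 : v * w * v⁻¹ ∈ (aEl e).1 := conj_mem_aEl e hpi hv hw
  have h2 : u * v * w * (u * v)⁻¹ = u * (v * w * v⁻¹) * u⁻¹ := by group
  rw [h2]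
  exact mul_mem (mul_mem hu h1) (inv_mem hu)

theorem bEl_val_normal (e : CSG G ≃o A' × B')
    (hpi : piStar ↥((aEl e).1) ∩ piStar ↥((bEl e).1) = ∅) : ((bEl e).1).Normal := by
  constructor
  intro w hw g
  obtain ⟨u, hu, v, hv, hcomm, rfl⟩ := exists_decomp e g
  have h1 : u * w * u⁻¹ ∈ (bEl e).1 := conj_mem_bEl e hpi hu hw
  have h2 : u * v * w * (u * v)⁻¹ = v * (u * w * u⁻¹) * v⁻¹ := by
    rw [hcomm.eq]
    group
  rw [h2]
  exact mul_mem (mul_mem hv h1) (inv_mem hv)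

end Normality

end CSP

/-- The poset of closed subgroups of a profinite group `G` is directly
decomposable iff `G = G₁ × G₂` for nontrivial closed normal subgroups `G₁, G₂` with
`π*(G₁) ∩ π*(G₂) = ∅`. -/
theorem closed_subgroup_poset_directlyDecomposable_iff
    {G : Type u} [Group G] [TopologicalSpace G] [IsTopologicalGroup G]
    [CompactSpace G] [T2Space G] [TotallyDisconnectedSpace G] :
    DirectlyDecomposable {X : Subgroup G // IsClosed (X : Set G)} ↔
      ∃ G₁ G₂ : Subgroup G, G₁ ≠ ⊥ ∧ G₂ ≠ ⊥ ∧
        IsClosed (G₁ : Set G) ∧ IsClosed (G₂ : Set G) ∧ G₁.Normal ∧ G₂.Normal ∧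
        G₁ ⊓ G₂ = ⊥ ∧ (G₁ : Set G) * (G₂ : Set G) = Set.univ ∧
        piStar ↥G₁ ∩ piStar ↥G₂ = ∅ := by
  constructor
  · intro h
    obtain ⟨A', B', iA, iB, nA, nB, ⟨e⟩⟩ := h
    haveI := nA
    haveI := nB
    haveI : Nonempty A' := inferInstance
    haveI : Nonempty B' := inferInstance
    have hpi := CSP.piStar_disjoint e
    exact ⟨(CSP.aEl e).1, (CSP.bEl e).1, CSP.aEl_val_ne_bot e, CSP.bEl_val_ne_bot e,
      (CSP.aEl e).2, (CSP.bEl e).2, CSP.aEl_val_normal e hpi, CSP.bEl_val_normal e hpi,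
      CSP.aEl_val_inf_bEl_val e, CSP.aEl_val_mul_bEl_val e, hpi⟩
  · rintro ⟨G₁, G₂, h1, h2, h₁c, h₂c, h₁n, h₂n, hdisj, hprod, hpi⟩
    exact CSP.backward_dir h₁n h₂n hdisj hpi h1 h2 h₁c h₂c hprod
end

section
/- Let G be a profinite group. The poset of closed subgroups of G (ordered by inclusion) is directly decomposable if and only if the lattice of open subgroups of G is directly decomposable. -/
universe u

section OrderAux

variable {P Q : Type*} [PartialOrder P] [PartialOrder Q]

/-- A "filter": nonempty, upward closed, downward directed subset. -/
def IsFilt (F : Set P) : Prop :=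
  F.Nonempty ∧ (∀ a ∈ F, ∀ b, a ≤ b → b ∈ F) ∧
    ∀ a ∈ F, ∀ b ∈ F, ∃ c ∈ F, c ≤ a ∧ c ≤ b

def Filt (P : Type u) [PartialOrder P] : Type u := {F : Set P // IsFilt F}

instance Filt.instPartialOrder : PartialOrder (Filt P) where
  le F F' := F'.1 ⊆ F.1
  le_refl F := subset_refl _
  le_trans F G H h h' := subset_trans h' h
  le_antisymm F G h h' := Subtype.ext (le_antisymm h' h)

lemma Filt.le_def {F F' : Filt P} : F ≤ F' ↔ F'.1 ⊆ F.1 := Iff.rfl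

lemma isFilt_Ici (x : P) : IsFilt (Set.Ici x) :=
  ⟨⟨x, le_refl x⟩, fun a ha b hb => le_trans ha hb,
   fun a ha b hb => ⟨x, le_refl x, ha, hb⟩⟩

lemma Filt.nontrivial [Nontrivial P] : Nontrivial (Filt P) := by
  obtain ⟨x, y, hxy⟩ := exists_pair_ne P
  refine ⟨⟨Set.Ici x, isFilt_Ici x⟩, ⟨Set.Ici y, isFilt_Ici y⟩, fun h => hxy ?_⟩
  have h' : Set.Ici x = Set.Ici y := congrArg Subtype.val h
  exact le_antisymm (Set.Ici_subset_Ici.mp h'.ge) (Set.Ici_subset_Ici.mp h'.le)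

/-- Transport filters along an order isomorphism. -/
noncomputable def Filt.congr (e : P ≃o Q) : Filt P ≃o Filt Q where
  toFun F := ⟨e '' F.1, by
    obtain ⟨⟨a, ha⟩, hup, hdir⟩ := F.2
    refine ⟨⟨e a, ⟨a, ha, rfl⟩⟩, ?_, ?_⟩
    · rintro _ ⟨a, ha, rfl⟩ b hb
      exact ⟨e.symm b, hup a ha _ (e.le_symm_apply.mpr hb), e.apply_symm_apply b⟩
    · rintro _ ⟨a, ha, rfl⟩ _ ⟨b, hb, rfl⟩
      obtain ⟨c, hc, hca, hcb⟩ := hdir a ha b hb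
      exact ⟨e c, ⟨c, hc, rfl⟩, e.le_iff_le.mpr hca, e.le_iff_le.mpr hcb⟩⟩
  invFun F := ⟨e.symm '' F.1, by
    obtain ⟨⟨a, ha⟩, hup, hdir⟩ := F.2
    refine ⟨⟨e.symm a, ⟨a, ha, rfl⟩⟩, ?_, ?_⟩
    · rintro _ ⟨a, ha, rfl⟩ b hb
      refine ⟨e b, hup a ha _ ?_, e.symm_apply_apply b⟩
      rwa [← e.symm.le_iff_le, e.symm_apply_apply]
    · rintro _ ⟨a, ha, rfl⟩ _ ⟨b, hb, rfl⟩
      obtain ⟨c, hc, hca, hcb⟩ := hdir a ha b hb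
      exact ⟨e.symm c, ⟨c, hc, rfl⟩, e.symm.le_iff_le.mpr hca, e.symm.le_iff_le.mpr hcb⟩⟩
  left_inv F := Subtype.ext (by
    simp [← Set.image_comp])
  right_inv F := Subtype.ext (by
    simp [← Set.image_comp])
  map_rel_iff' {F F'} := by
    simp only [Equiv.coe_fn_mk, Filt.le_def]
    exact Set.image_subset_image_iff e.injective

end OrderAux
section OrderAux2

variable {α β : Type*} [PartialOrder α] [PartialOrder β]

lemma IsFilt.eq_prod {F : Set (α × β)} (hF : IsFilt F) :
    F = (Prod.fst '' F) ×ˢ (Prod.snd '' F) := by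
  obtain ⟨hne, hup, hdir⟩ := hF
  ext ⟨a, b⟩
  constructor
  · intro h
    exact ⟨⟨(a, b), h, rfl⟩, ⟨(a, b), h, rfl⟩⟩
  · rintro ⟨⟨⟨a', b'⟩, h1, rfl⟩, ⟨⟨a'', b''⟩, h2, rfl⟩⟩
    obtain ⟨⟨c, d⟩, hc, hca, hcb⟩ := hdir _ h1 _ h2
    exact hup _ hc _ ⟨le_trans hca.1 (le_refl _), le_trans hcb.2 (le_refl _)⟩

lemma IsFilt.fst {F : Set (α × β)} (hF : IsFilt F) : IsFilt (Prod.fst '' F) := by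
  obtain ⟨⟨x, hx⟩, hup, hdir⟩ := hF
  refine ⟨⟨x.1, x, hx, rfl⟩, ?_, ?_⟩
  · rintro _ ⟨x, hx, rfl⟩ b hb
    exact ⟨(b, x.2), hup x hx _ ⟨hb, le_refl _⟩, rfl⟩
  · rintro _ ⟨x, hx, rfl⟩ _ ⟨y, hy, rfl⟩
    obtain ⟨c, hc, hcx, hcy⟩ := hdir x hx y hy
    exact ⟨c.1, ⟨c, hc, rfl⟩, hcx.1, hcy.1⟩

lemma IsFilt.snd {F : Set (α × β)} (hF : IsFilt F) : IsFilt (Prod.snd '' F) := by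
  obtain ⟨⟨x, hx⟩, hup, hdir⟩ := hF
  refine ⟨⟨x.2, x, hx, rfl⟩, ?_, ?_⟩
  · rintro _ ⟨x, hx, rfl⟩ b hb
    exact ⟨(x.1, b), hup x hx _ ⟨le_refl _, hb⟩, rfl⟩
  · rintro _ ⟨x, hx, rfl⟩ _ ⟨y, hy, rfl⟩
    obtain ⟨c, hc, hcx, hcy⟩ := hdir x hx y hy
    exact ⟨c.2, ⟨c, hc, rfl⟩, hcx.2, hcy.2⟩

lemma IsFilt.prod {F₁ : Set α} {F₂ : Set β} (h₁ : IsFilt F₁) (h₂ : IsFilt F₂) :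
    IsFilt (F₁ ×ˢ F₂) := by
  obtain ⟨⟨x₁, hx₁⟩, hup₁, hdir₁⟩ := h₁
  obtain ⟨⟨x₂, hx₂⟩, hup₂, hdir₂⟩ := h₂
  refine ⟨⟨(x₁, x₂), hx₁, hx₂⟩, ?_, ?_⟩
  · rintro ⟨a, b⟩ ⟨ha, hb⟩ ⟨a', b'⟩ ⟨ha', hb'⟩
    exact ⟨hup₁ a ha a' ha', hup₂ b hb b' hb'⟩
  · rintro ⟨a, b⟩ ⟨ha, hb⟩ ⟨a', b'⟩ ⟨ha', hb'⟩
    obtain ⟨c, hc, hca, hca'⟩ := hdir₁ a ha a' ha'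
    obtain ⟨d, hd, hdb, hdb'⟩ := hdir₂ b hb b' hb'
    exact ⟨(c, d), ⟨hc, hd⟩, ⟨hca, hdb⟩, ⟨hca', hdb'⟩⟩

/-- Filters on a product split as a product of filters. -/
noncomputable def Filt.prodIso : Filt (α × β) ≃o Filt α × Filt β where
  toFun F := (⟨Prod.fst '' F.1, F.2.fst⟩, ⟨Prod.snd '' F.1, F.2.snd⟩)
  invFun F := ⟨F.1.1 ×ˢ F.2.1, F.1.2.prod F.2.2⟩
  left_inv F := Subtype.ext F.2.eq_prod.symm
  right_inv F := by
    obtain ⟨⟨F₁, h₁⟩, ⟨F₂, h₂⟩⟩ := F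
    refine Prod.ext (Subtype.ext ?_) (Subtype.ext ?_)
    · exact Set.fst_image_prod _ h₂.1
    · exact Set.snd_image_prod h₁.1 _
  map_rel_iff' {F F'} := by
    simp only [Equiv.coe_fn_mk, Prod.mk_le_mk, Filt.le_def]
    constructor
    · rintro ⟨h1, h2⟩
      calc F'.1 = (Prod.fst '' F'.1) ×ˢ (Prod.snd '' F'.1) := F'.2.eq_prod
        _ ⊆ (Prod.fst '' F.1) ×ˢ (Prod.snd '' F.1) := Set.prod_mono h1 h2
        _ = F.1 := F.2.eq_prod.symm
    · intro h
      exact ⟨Set.image_mono h, Set.image_mono h⟩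

/-- The sub-poset of elements with finite up-set. -/
def FinIci (P : Type u) [PartialOrder P] : Type u := {a : P // (Set.Ici a).Finite}

instance {P : Type*} [PartialOrder P] : PartialOrder (FinIci P) :=
  Subtype.partialOrder _

lemma FinIci.le_def {P : Type*} [PartialOrder P] {a b : FinIci P} :
    a ≤ b ↔ a.1 ≤ b.1 := Iff.rfl

/-- Transport along an order isomorphism. -/
def FinIci.congr {P Q : Type*} [PartialOrder P] [PartialOrder Q] (e : P ≃o Q) :
    FinIci P ≃o FinIci Q where
  toFun a := ⟨e a.1, by
    have : Set.Ici (e a.1) = e '' Set.Ici a.1 := by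
      ext x
      simp only [Set.mem_Ici, Set.mem_image]
      constructor
      · intro h
        exact ⟨e.symm x, by rwa [← e.le_iff_le, e.apply_symm_apply], e.apply_symm_apply x⟩
      · rintro ⟨y, hy, rfl⟩
        exact e.le_iff_le.mpr hy
    rw [this]
    exact a.2.image e⟩
  invFun a := ⟨e.symm a.1, by
    have : Set.Ici (e.symm a.1) = e.symm '' Set.Ici a.1 := by
      ext x
      simp only [Set.mem_Ici, Set.mem_image]
      constructor
      · intro h
        exact ⟨e x, by rwa [← e.symm.le_iff_le, e.symm_apply_apply], e.symm_apply_apply x⟩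
      · rintro ⟨y, hy, rfl⟩
        exact e.symm.le_iff_le.mpr hy
    rw [this]
    exact a.2.image e.symm⟩
  left_inv a := Subtype.ext (e.symm_apply_apply a.1)
  right_inv a := Subtype.ext (e.apply_symm_apply a.1)
  map_rel_iff' {a b} := e.le_iff_le

/-- FinIci of a product splits. -/
noncomputable def FinIci.prodIso : FinIci (α × β) ≃o FinIci α × FinIci β where
  toFun a := (⟨a.1.1, by
      have := a.2
      rw [← Set.Ici_prod_Ici] at this
      exact Set.Finite.of_finite_image (this.subset (by
        rintro _ ⟨x, hx, rfl⟩
        exact ⟨hx, le_refl _⟩)) (fun x _ y _ h => (Prod.mk.injEq _ _ _ _ ▸ h).1)⟩,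
    ⟨a.1.2, by
      have := a.2
      rw [← Set.Ici_prod_Ici] at this
      exact Set.Finite.of_finite_image (this.subset (by
        rintro _ ⟨x, hx, rfl⟩
        exact ⟨le_refl _, hx⟩)) (fun x _ y _ h => (Prod.mk.injEq _ _ _ _ ▸ h).2)⟩)
  invFun a := ⟨(a.1.1, a.2.1), by
    rw [← Set.Ici_prod_Ici]
    exact a.1.2.prod a.2.2⟩
  left_inv a := Subtype.ext rfl
  right_inv a := rfl
  map_rel_iff' {a b} := by
    simp only [Equiv.coe_fn_mk, Prod.mk_le_mk, FinIci.le_def]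
    exact (Prod.mk_le_mk).symm.trans Iff.rfl

end OrderAux2
section Topo

open Pointwise

variable {G : Type u} [Group G] [TopologicalSpace G] [IsTopologicalGroup G]
    [CompactSpace G] [T2Space G] [TotallyDisconnectedSpace G]

/-- Separating a closed subgroup from a point by an open subgroup. -/
lemma exists_open_subgroup_not_mem {H : Subgroup G} (hH : IsClosed (H : Set G))
    {g : G} (hg : g ∉ H) :
    ∃ U : Subgroup G, IsOpen (U : Set G) ∧ H ≤ U ∧ g ∉ U := by
  set C : Set G := (fun h => h * g) '' (H : Set G) with hCdef
  have hC : IsClosed C := (Homeomorph.mulRight g).isClosedMap _ hH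
  have h1 : (1 : G) ∈ Cᶜ := by
    rintro ⟨h, hh, hhg⟩
    exact hg (by
      have hhg' : h * g = 1 := hhg
      have hg' : g = h⁻¹ := eq_inv_of_mul_eq_one_right hhg'
      rw [hg']; exact H.inv_mem hh)
  obtain ⟨V, hV, h1V, hVsub⟩ := compact_exists_isClopen_in_isOpen hC.isOpen_compl h1
  obtain ⟨N, hN⟩ := IsTopologicalGroup.exist_openNormalSubgroup_sub_clopen_nhds_of_one hV h1V
  refine ⟨H ⊔ N.toSubgroup, Subgroup.isOpen_mono le_sup_right N.isOpen, le_sup_left, ?_⟩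
  intro hgmem
  have hmul : g ∈ ((H : Set G) * ((N.toOpenSubgroup.toSubgroup : Subgroup G) : Set G)) := by
    rw [← Subgroup.mul_normal H N.toOpenSubgroup.toSubgroup]
    exact hgmem
  obtain ⟨h, hh, n, hn, hhn⟩ := hmul
  have hnC : n ∈ C := ⟨h⁻¹, H.inv_mem hh, by rw [← hhn]; group⟩
  exact hVsub (hN hn) hnC

/-- A closed subgroup is the intersection of the open subgroups containing it. -/
lemma mem_of_forall_open {H : Subgroup G} (hH : IsClosed (H : Set G)) {g : G}
    (h : ∀ U : Subgroup G, IsOpen (U : Set G) → H ≤ U → g ∈ U) : g ∈ H := by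
  by_contra hg
  obtain ⟨U, hUo, hHU, hgU⟩ := exists_open_subgroup_not_mem hH hg
  exact hgU (h U hUo hHU)

lemma sInf_open_supergroups (H : Subgroup G) (hH : IsClosed (H : Set G)) :
    sInf {U : Subgroup G | IsOpen (U : Set G) ∧ H ≤ U} = H := by
  refine le_antisymm (fun x hx => ?_) (le_sInf fun U hU => hU.2)
  exact mem_of_forall_open hH fun U hUo hHU => (Subgroup.mem_sInf.mp hx) U ⟨hUo, hHU⟩

/-- An open subgroup has a finite up-set in the poset of closed subgroups. -/
lemma finite_Ici_of_isOpen {H : Subgroup G} (hO : IsOpen (H : Set G))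
    (hC : IsClosed (H : Set G)) :
    (Set.Ici (⟨H, hC⟩ : {X : Subgroup G // IsClosed (X : Set G)})).Finite := by
  have : Finite (G ⧸ H) := Subgroup.quotient_finite_of_isOpen H hO
  have key : ∀ K₁ ∈ Set.Ici (⟨H, hC⟩ : {X : Subgroup G // IsClosed (X : Set G)}),
      ∀ K₂ ∈ Set.Ici (⟨H, hC⟩ : {X : Subgroup G // IsClosed (X : Set G)}),
      (QuotientGroup.mk '' (K₁.1 : Set G) : Set (G ⧸ H)) ⊆ QuotientGroup.mk '' (K₂.1 : Set G) →
      K₁.1 ≤ K₂.1 := by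
    intro K₁ _ K₂ hK₂ hsub x hx
    obtain ⟨y, hy, hyx⟩ := hsub ⟨x, hx, rfl⟩
    have : y⁻¹ * x ∈ H := QuotientGroup.eq.mp hyx
    have h2 : y⁻¹ * x ∈ K₂.1 := hK₂ this
    have := K₂.1.mul_mem hy h2
    rwa [mul_inv_cancel_left] at this
  apply Set.Finite.of_finite_image (f := fun K => (QuotientGroup.mk '' (K.1 : Set G) : Set (G ⧸ H)))
  · exact Set.toFinite _
  · intro K₁ h₁ K₂ h₂ heq
    exact Subtype.ext (le_antisymm (key K₁ h₁ K₂ h₂ heq.le) (key K₂ h₂ K₁ h₁ heq.ge))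

/-- A closed subgroup with a finite up-set is open. -/
lemma isOpen_of_finite_Ici {H : Subgroup G} (hC : IsClosed (H : Set G))
    (hfin : (Set.Ici (⟨H, hC⟩ : {X : Subgroup G // IsClosed (X : Set G)})).Finite) :
    IsOpen (H : Set G) := by
  set S : Set (Set G) := {s | ∃ U : Subgroup G, IsOpen (U : Set G) ∧ H ≤ U ∧ s = (U : Set G)}
    with hSdef
  have hSsub : S ⊆ (fun K : {X : Subgroup G // IsClosed (X : Set G)} => (K.1 : Set G)) ''
      Set.Ici (⟨H, hC⟩ : {X : Subgroup G // IsClosed (X : Set G)}) := by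
    rintro _ ⟨U, hUo, hHU, rfl⟩
    exact ⟨⟨U, U.isClosed_of_isOpen hUo⟩, hHU, rfl⟩
  have hSfin : S.Finite := (hfin.image _).subset hSsub
  have hHS : (H : Set G) = ⋂₀ S := by
    ext x
    simp only [Set.mem_sInter]
    constructor
    · rintro hx _ ⟨U, hUo, hHU, rfl⟩
      exact hHU hx
    · intro hx
      exact mem_of_forall_open hC fun U hUo hHU => hx _ ⟨U, hUo, hHU, rfl⟩
  rw [hHS]
  exact Set.Finite.isOpen_sInter hSfin (by rintro _ ⟨U, hUo, _, rfl⟩; exact hUo)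

/-- The open subgroups are the closed subgroups with finite up-set. -/
noncomputable def openIso : {X : Subgroup G // IsOpen (X : Set G)} ≃o
    FinIci {X : Subgroup G // IsClosed (X : Set G)} where
  toFun U := ⟨⟨U.1, U.1.isClosed_of_isOpen U.2⟩, finite_Ici_of_isOpen U.2 _⟩
  invFun K := ⟨K.1.1, isOpen_of_finite_Ici K.1.2 (by
    convert K.2 using 2)⟩
  left_inv U := rfl
  right_inv K := Subtype.ext (Subtype.ext rfl)
  map_rel_iff' := Iff.rfl

/-- Helper: a filter of open subgroups contains every open subgroup above its intersection. -/
lemma mem_filt_of_sInf_le {F : Set {X : Subgroup G // IsOpen (X : Set G)}} (hF : IsFilt F)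
    {U : {X : Subgroup G // IsOpen (X : Set G)}}
    (hle : sInf (Subtype.val '' F) ≤ U.1) : U ∈ F := by
  obtain ⟨⟨W₀, hW₀⟩, hup, hdir⟩ := hF
  have : Nonempty F := ⟨⟨W₀, hW₀⟩⟩
  have hKc : IsCompact ((U.1 : Set G)ᶜ) := (U.2.isClosed_compl).isCompact
  have hcov : ((U.1 : Set G)ᶜ) ⊆ ⋃ i : F, ((i.1.1 : Set G)ᶜ) := by
    intro x hx
    by_contra hmem
    simp only [Set.mem_iUnion, Set.mem_compl_iff, not_exists, not_not] at hmem
    have : x ∈ sInf (Subtype.val '' F) := Subgroup.mem_sInf.mpr (by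
      rintro _ ⟨V, hV, rfl⟩
      exact hmem ⟨V, hV⟩)
    exact hx (hle this)
  have hdirected : Directed (· ⊆ ·) (fun i : F => ((i.1.1 : Set G)ᶜ)) := by
    rintro i j
    obtain ⟨c, hc, hci, hcj⟩ := hdir i.1 i.2 j.1 j.2
    exact ⟨⟨c, hc⟩, Set.compl_subset_compl.mpr hci, Set.compl_subset_compl.mpr hcj⟩
  obtain ⟨i, hi⟩ := hKc.elim_directed_cover _
    (fun i : F => (i.1.1.isClosed_of_isOpen i.1.2).isOpen_compl) hcov hdirected
  have hsub : (U.1 : Set G) ⊇ (i.1.1 : Set G) := Set.compl_subset_compl.mp hi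
  exact hup i.1 i.2 U hsub

lemma isFilt_opens (H : {X : Subgroup G // IsClosed (X : Set G)}) :
    IsFilt {U : {X : Subgroup G // IsOpen (X : Set G)} | H.1 ≤ U.1} := by
  refine ⟨⟨⟨⊤, by rw [Subgroup.coe_top]; exact isOpen_univ⟩, (le_top : H.1 ≤ ⊤)⟩, ?_, ?_⟩
  · intro U hU V hUV
    exact le_trans (show H.1 ≤ U.1 from hU) (show U.1 ≤ V.1 from hUV)
  · intro U hU V hV
    refine ⟨⟨U.1 ⊓ V.1, by rw [Subgroup.coe_inf]; exact U.2.inter V.2⟩,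
      show H.1 ≤ U.1 ⊓ V.1 from le_inf (show H.1 ≤ U.1 from hU) (show H.1 ≤ V.1 from hV),
      Subtype.coe_le_coe.mp inf_le_left, Subtype.coe_le_coe.mp inf_le_right⟩

lemma image_opens (H : {X : Subgroup G // IsClosed (X : Set G)}) :
    Subtype.val '' {U : {X : Subgroup G // IsOpen (X : Set G)} | H.1 ≤ U.1} =
      {U : Subgroup G | IsOpen (U : Set G) ∧ H.1 ≤ U} := by
  ext V
  constructor
  · rintro ⟨U, hU, rfl⟩
    exact ⟨U.2, hU⟩
  · rintro ⟨hVo, hHV⟩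
    exact ⟨⟨V, hVo⟩, hHV, rfl⟩

/-- The closed subgroups are the filters of open subgroups. -/
noncomputable def closedIso : {X : Subgroup G // IsClosed (X : Set G)} ≃o
    Filt {X : Subgroup G // IsOpen (X : Set G)} where
  toFun H := ⟨{U | H.1 ≤ U.1}, isFilt_opens H⟩
  invFun F := ⟨sInf (Subtype.val '' F.1), by
    rw [Subgroup.coe_sInf]
    exact isClosed_biInter (by
      rintro _ ⟨U, hU, rfl⟩
      exact U.1.isClosed_of_isOpen U.2)⟩
  left_inv H := Subtype.ext (by
    show sInf (Subtype.val '' {U : {X : Subgroup G // IsOpen (X : Set G)} | H.1 ≤ U.1}) = H.1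
    rw [image_opens, sInf_open_supergroups H.1 H.2])
  right_inv F := Subtype.ext (by
    show {U : {X : Subgroup G // IsOpen (X : Set G)} |
      sInf (Subtype.val '' F.1) ≤ U.1} = F.1
    ext U
    simp only [Set.mem_setOf_eq]
    exact ⟨fun hU => mem_filt_of_sInf_le F.2 hU, fun hU => sInf_le ⟨U, hU, rfl⟩⟩)
  map_rel_iff' {H K} := by
    simp only [Equiv.coe_fn_mk, Filt.le_def, Set.setOf_subset_setOf]
    constructor
    · intro h
      have h1 : H.1 = sInf {U : Subgroup G | IsOpen (U : Set G) ∧ H.1 ≤ U} :=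
        (sInf_open_supergroups H.1 H.2).symm
      have h2 : K.1 = sInf {U : Subgroup G | IsOpen (U : Set G) ∧ K.1 ≤ U} :=
        (sInf_open_supergroups K.1 K.2).symm
      show H.1 ≤ K.1
      rw [h1, h2]
      refine sInf_le_sInf ?_
      rintro U ⟨hUo, hKU⟩
      exact ⟨hUo, @h ⟨U, hUo⟩ hKU⟩
    · intro h U hU
      exact le_trans (show H.1 ≤ K.1 from h) (show K.1 ≤ U.1 from hU)

end Topo
section Main

variable {G : Type u} [Group G] [TopologicalSpace G] [IsTopologicalGroup G]
    [CompactSpace G] [T2Space G] [TotallyDisconnectedSpace G]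

lemma nontrivial_finIci {α β : Type*} [PartialOrder α] [PartialOrder β]
    [Nontrivial α]
    (e : {X : Subgroup G // IsClosed (X : Set G)} ≃o α × β) : Nontrivial (FinIci α) := by
  set t : {X : Subgroup G // IsClosed (X : Set G)} :=
    ⟨⊤, by rw [Subgroup.coe_top]; exact isClosed_univ⟩ with htdef
  have ht : ∀ K : {X : Subgroup G // IsClosed (X : Set G)}, K ≤ t :=
    fun K => (le_top : K.1 ≤ ⊤)
  set t₁ := (e t).1 with ht₁
  set t₂ := (e t).2 with ht₂
  have htop1 : ∀ a : α, a ≤ t₁ := by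
    intro a
    have h := e.le_iff_le.mpr (ht (e.symm (a, t₂)))
    rw [e.apply_symm_apply] at h
    exact h.1
  have hfin_t₁ : (Set.Ici t₁).Finite :=
    (Set.finite_singleton t₁).subset fun x hx => le_antisymm (htop1 x) hx
  obtain ⟨x, y, hxy⟩ := exists_pair_ne α
  obtain ⟨a₀, ha₀⟩ : ∃ a₀ : α, a₀ ≠ t₁ := by
    rcases eq_or_ne x t₁ with h | h
    · exact ⟨y, by rw [← h]; exact hxy.symm⟩
    · exact ⟨x, h⟩
  set H := e.symm (a₀, t₂) with hHdef
  have hHne : H ≠ t := by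
    intro h
    apply ha₀
    have : (a₀, t₂) = e t := by rw [← h, e.apply_symm_apply]
    exact congrArg Prod.fst this
  have hH1ne : H.1 ≠ (⊤ : Subgroup G) := fun h => hHne (Subtype.ext h)
  obtain ⟨g, hg⟩ : ∃ g : G, g ∉ H.1 := by
    by_contra h
    push_neg at h
    exact hH1ne ((Subgroup.eq_top_iff' H.1).mpr h)
  obtain ⟨U, hUo, hHU, hgU⟩ := exists_open_subgroup_not_mem H.2 hg
  set Uc : {X : Subgroup G // IsClosed (X : Set G)} := ⟨U, U.isClosed_of_isOpen hUo⟩ with hUcdef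
  have hUct : Uc ≠ t := by
    intro h
    apply hgU
    have : U = (⊤ : Subgroup G) := congrArg Subtype.val h
    rw [this]
    trivial
  have hle : H ≤ Uc := hHU
  have heHU : (a₀, t₂) ≤ e Uc := by
    have := e.le_iff_le.mpr hle
    rwa [hHdef, e.apply_symm_apply] at this
  have hUt : e Uc ≤ (t₁, t₂) := e.le_iff_le.mpr (ht Uc)
  have hb' : (e Uc).2 = t₂ := le_antisymm hUt.2 heHU.2
  have ha' : (e Uc).1 ≠ t₁ := by
    intro h
    apply hUct
    apply e.injective
    rw [Prod.ext_iff]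
    exact ⟨h, hb'⟩
  have hIciUc : (Set.Ici Uc).Finite := finite_Ici_of_isOpen hUo _
  have hIcieUc : (Set.Ici (e Uc)).Finite := ((FinIci.congr e) ⟨Uc, hIciUc⟩).2
  have ha'fin : (Set.Ici (e Uc).1).Finite := ((FinIci.prodIso) ⟨e Uc, hIcieUc⟩).1.2
  exact ⟨⟨(e Uc).1, ha'fin⟩, ⟨t₁, hfin_t₁⟩, fun h => ha' (congrArg Subtype.val h)⟩

theorem closed_directlyDecomposable_iff_open_directlyDecomposable' :
    DirectlyDecomposable {X : Subgroup G // IsClosed (X : Set G)} ↔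
      DirectlyDecomposable {X : Subgroup G // IsOpen (X : Set G)} := by
  constructor
  · rintro ⟨α, β, _, _, hα, hβ, ⟨e⟩⟩
    refine ⟨FinIci α, FinIci β, inferInstance, inferInstance,
      nontrivial_finIci e, nontrivial_finIci (e.trans OrderIso.prodComm),
      ⟨openIso.trans ((FinIci.congr e).trans FinIci.prodIso)⟩⟩
  · rintro ⟨α, β, _, _, hα, hβ, ⟨e⟩⟩
    refine ⟨Filt α, Filt β, inferInstance, inferInstance,
      Filt.nontrivial, Filt.nontrivial,
      ⟨closedIso.trans ((Filt.congr e).trans Filt.prodIso)⟩⟩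

end Main

/-- For a profinite group `G`, the poset of closed subgroups of `G` is
directly decomposable iff the lattice of open subgroups of `G` is directly decomposable. -/
theorem closed_directlyDecomposable_iff_open_directlyDecomposable
    {G : Type u} [Group G] [TopologicalSpace G] [IsTopologicalGroup G]
    [CompactSpace G] [T2Space G] [TotallyDisconnectedSpace G] :
    DirectlyDecomposable {X : Subgroup G // IsClosed (X : Set G)} ↔
      DirectlyDecomposable {X : Subgroup G // IsOpen (X : Set G)} := by
  exact closed_directlyDecomposable_iff_open_directlyDecomposable'
end

section
/- Let G be a profinite group and let w be a natural number. Then every antichain in the poset of open subgroups of G has at most w elements if and only if every antichain in the poset of closed subgroups of G has at most w elements. -/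
open TopologicalGroup in
/-- If `K` is a closed subgroup of a profinite group and `¬ H ≤ K`, there is an open
subgroup `U ⊇ K` with `¬ H ≤ U`. -/
lemma exists_open_subgroup_sep {G : Type*} [Group G] [TopologicalSpace G] [IsTopologicalGroup G]
    [CompactSpace G] [T2Space G] [TotallyDisconnectedSpace G] {H K : Subgroup G}
    (hK : IsClosed (K : Set G)) (hHK : ¬ H ≤ K) :
    ∃ U : Subgroup G, IsOpen (U : Set G) ∧ K ≤ U ∧ ¬ H ≤ U := by
  obtain ⟨g, hgH, hgK⟩ := SetLike.not_le_iff_exists.mp hHK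
  -- `W` is an open neighbourhood of `1` with `g * W ∩ K = ∅`
  set W : Set G := (fun x => g * x) ⁻¹' (K : Set G)ᶜ with hW
  have hWopen : IsOpen W := (hK.isOpen_compl).preimage (by continuity)
  have h1W : (1 : G) ∈ W := by simpa [hW] using hgK
  obtain ⟨V, hVclopen, h1V, hVW⟩ :=
    isTopologicalBasis_isClopen.mem_nhds_iff.mp (hWopen.mem_nhds h1W)
  obtain ⟨N, hN⟩ := IsTopologicalGroup.exist_openNormalSubgroup_sub_clopen_nhds_of_one hVclopen h1V
  refine ⟨K ⊔ N.toSubgroup, Subgroup.isOpen_mono le_sup_right N.isOpen, le_sup_left, ?_⟩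
  intro hle
  have hg : g ∈ (K ⊔ N.toSubgroup : Subgroup G) := hle hgH
  haveI : N.toSubgroup.Normal := N.isNormal'
  rw [← SetLike.mem_coe, Subgroup.mul_normal] at hg
  obtain ⟨k, hk, n, hn, rfl⟩ := hg
  have hninv : n⁻¹ ∈ W := hVW (hN (inv_mem hn))
  simp only [hW, Set.mem_preimage, Set.mem_compl_iff, mul_inv_cancel_right] at hninv
  exact hninv hk

/-- Let `G` be a profinite group and `w` a natural number. Every antichain
in the poset of open subgroups of `G` has at most `w` elements iff every antichain in the
poset of closed subgroups of `G` has at most `w` elements. -/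
theorem open_antichains_bounded_iff_closed_antichains_bounded
    {G : Type*} [Group G] [TopologicalSpace G] [IsTopologicalGroup G]
    [CompactSpace G] [T2Space G] [TotallyDisconnectedSpace G] (w : ℕ) :
    (∀ A : Set (Subgroup G), (∀ X ∈ A, IsOpen (X : Set G)) →
        IsAntichain (· ≤ ·) A → A.Finite ∧ A.ncard ≤ w) ↔
      (∀ A : Set (Subgroup G), (∀ X ∈ A, IsClosed (X : Set G)) →
        IsAntichain (· ≤ ·) A → A.Finite ∧ A.ncard ≤ w) := by
  constructor
  · -- hard direction
    intro hopen A hAclosed hAanti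
    by_contra hcon
    -- extract a subset `B ⊆ A` of cardinality `w + 1`
    obtain ⟨B, hBA, hBcard⟩ : ∃ B ⊆ A, B.ncard = w + 1 := by
      rcases Set.finite_or_infinite A with hfin | hinf
      · push_neg at hcon
        exact Set.exists_subset_card_eq (hcon hfin)
      · obtain ⟨B, hBA, hBfin, hBcard⟩ := hinf.exists_subset_ncard_eq (w + 1)
        exact ⟨B, hBA, hBcard⟩
    have hBfin : B.Finite := by
      by_contra h
      rw [Set.Infinite.ncard h] at hBcard; omega
    -- for each `K ∈ B`, an open subgroup containing `K` containing no other element of `B`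
    have hfun : ∀ K : Subgroup G, ∃ U : Subgroup G, IsOpen (U : Set G) ∧ K ≤ U ∧
        (K ∈ B → ∀ H ∈ B, H ≠ K → ¬ H ≤ U) := by
      intro K
      by_cases hKB : K ∈ B
      · have hUs : ∀ H : Subgroup G, ∃ U : Subgroup G, IsOpen (U : Set G) ∧ K ≤ U ∧
            ((H ∈ B ∧ H ≠ K) → ¬ H ≤ U) := by
          intro H
          by_cases hH : H ∈ B ∧ H ≠ K
          · obtain ⟨U, h1, h2, h3⟩ := exists_open_subgroup_sep (hAclosed K (hBA hKB))
              (hAanti (hBA hH.1) (hBA hKB) hH.2)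
            exact ⟨U, h1, h2, fun _ => h3⟩
          · exact ⟨⊤, by simp, le_top, fun h => absurd h hH⟩
        choose u hu1 hu2 hu3 using hUs
        refine ⟨⨅ H ∈ B, u H, ?_, le_iInf fun H => le_iInf fun _ => hu2 H, ?_⟩
        · have : ((⨅ H ∈ B, u H : Subgroup G) : Set G) = ⋂ H ∈ B, (u H : Set G) := by
            simp [Subgroup.coe_iInf]
          rw [this]
          exact hBfin.isOpen_biInter fun H _ => hu1 H
        · intro _ H hHB hHK hle
          exact hu3 H ⟨hHB, hHK⟩ (hle.trans (biInf_le _ hHB))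
      · exact ⟨⊤, by simp, le_top, fun h => absurd h hKB⟩
    choose u hu1 hu2 hu3 using hfun
    -- the image of `B` under `u` is an antichain of open subgroups of size `w + 1`
    have huinj : Set.InjOn u B := by
      intro K₁ h₁ K₂ h₂ he
      by_contra hne
      exact hu3 K₂ h₂ K₁ h₁ hne (he ▸ hu2 K₁)
    have hnotle : ∀ K₁ ∈ B, ∀ K₂ ∈ B, K₁ ≠ K₂ → ¬ u K₁ ≤ u K₂ := by
      intro K₁ h₁ K₂ h₂ hne hle
      exact hu3 K₂ h₂ K₁ h₁ hne ((hu2 K₁).trans hle)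
    have := hopen (u '' B) (by rintro _ ⟨K, hK, rfl⟩; exact hu1 K)
      (by
        rintro _ ⟨K₁, h₁, rfl⟩ _ ⟨K₂, h₂, rfl⟩ hne hle
        exact hnotle K₁ h₁ K₂ h₂ (fun h => hne (h ▸ rfl)) hle)
    rw [Set.ncard_image_of_injOn huinj, hBcard] at this
    omega
  · -- easy direction: open subgroups are closed
    intro hclosed A hAopen hAanti
    exact hclosed A (fun X hX => X.isClosed_of_isOpen (hAopen X hX)) hAanti
end

section
/- Let G be a profinite group. The following are equivalent: (1) for all closed subgroups X, Y, Z of G with X ⊆ Z, the topological closure of the subgroup generated by X and Y ∩ Z equals the intersection of Z with the topological closure of the subgroup generated by X and Y; (2) for all open subgroups X, Y, Z of G with X ⊆ Z, the subgroup generated by X and Y ∩ Z equals the intersection of Z with the subgroup generated by X and Y. -/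
open TopologicalGroup

section Aux

variable {G : Type*} [Group G] [TopologicalSpace G] [IsTopologicalGroup G]
    [CompactSpace G] [T2Space G] [TotallyDisconnectedSpace G]

instance : Nonempty (OpenNormalSubgroup G) :=
  ⟨⟨(⊤ : OpenSubgroup G), ⟨fun _ _ _ => trivial⟩⟩⟩

/-- In a profinite group, membership in the closure of a subgroup is detected by
open normal subgroups. -/
theorem mem_topologicalClosure_iff_aux (H : Subgroup G) (g : G) :
    g ∈ H.topologicalClosure ↔ ∀ N : OpenNormalSubgroup G, g ∈ H ⊔ (N : Subgroup G) := by
  constructor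
  · intro hg N
    have hopen : IsOpen ((H ⊔ (N : Subgroup G) : Subgroup G) : Set G) :=
      Subgroup.isOpen_mono (le_sup_right : (N : Subgroup G) ≤ _) N.toOpenSubgroup.isOpen
    exact Subgroup.topologicalClosure_minimal H le_sup_left
      (Subgroup.isClosed_of_isOpen _ hopen) hg
  · intro h
    have : g ∈ closure (H : Set G) := by
      rw [mem_closure_iff]
      intro o ho hgo
      have h1 : (1 : G) ∈ (fun x => g * x) ⁻¹' o := by simpa using hgo
      have hopre : IsOpen ((fun x => g * x) ⁻¹' o) := ho.preimage (by continuity)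
      obtain ⟨V, hV, h1V, hVo⟩ := compact_exists_isClopen_in_isOpen hopre h1
      obtain ⟨N, hN⟩ := IsTopologicalGroup.exist_openNormalSubgroup_sub_clopen_nhds_of_one hV h1V
      have hgN := h N
      rw [← SetLike.mem_coe, Subgroup.mul_normal] at hgN
      obtain ⟨x, hx, n, hn, hxn⟩ := hgN
      refine ⟨x, ?_, hx⟩
      have hninv : n⁻¹ ∈ N := inv_mem hn
      have : g * n⁻¹ ∈ o := hVo (hN hninv)
      rwa [← hxn, mul_assoc, mul_inv_cancel, mul_one] at this
    exact this

/-- The compactness step: given closed `Y`, `Z` and an open normal `M`, some open normal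
`N ≤ M` satisfies `(Y ⊔ N) ⊓ (Z ⊔ N) ≤ (Y ⊓ Z) ⊔ M`. -/
theorem exists_openNormal_aux (Y Z : Subgroup G) (hY : IsClosed (Y : Set G))
    (hZ : IsClosed (Z : Set G)) (M : OpenNormalSubgroup G) :
    ∃ N : OpenNormalSubgroup G, (N : Subgroup G) ≤ (M : Subgroup G) ∧
      (Y ⊔ (N : Subgroup G)) ⊓ (Z ⊔ (N : Subgroup G)) ≤ (Y ⊓ Z) ⊔ (M : Subgroup G) := by
  set s : Set G := (((Y ⊓ Z) ⊔ (M : Subgroup G) : Subgroup G) : Set G)ᶜ with hs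
  have hsopen : IsOpen (((Y ⊓ Z) ⊔ (M : Subgroup G) : Subgroup G) : Set G) :=
    Subgroup.isOpen_mono (le_sup_right : (M : Subgroup G) ≤ _) M.toOpenSubgroup.isOpen
  have hscompact : IsCompact s := hsopen.isClosed_compl.isCompact
  set t : OpenNormalSubgroup G → Set G := fun N =>
    (((Y ⊔ (N : Subgroup G)) ⊓ (Z ⊔ (N : Subgroup G)) : Subgroup G) : Set G) with ht
  have htc : ∀ N, IsClosed (t N) := by
    intro N
    have h1 : IsOpen ((Y ⊔ (N : Subgroup G) : Subgroup G) : Set G) :=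
      Subgroup.isOpen_mono le_sup_right N.toOpenSubgroup.isOpen
    have h2 : IsOpen ((Z ⊔ (N : Subgroup G) : Subgroup G) : Set G) :=
      Subgroup.isOpen_mono le_sup_right N.toOpenSubgroup.isOpen
    simp only [ht, Subgroup.coe_inf]
    exact (Subgroup.isClosed_of_isOpen _ h1).inter (Subgroup.isClosed_of_isOpen _ h2)
  have hdt : Directed (· ⊇ ·) t := by
    intro N₁ N₂
    refine ⟨N₁ ⊓ N₂, ?_, ?_⟩
    · intro x hx
      have hle : ((N₁ ⊓ N₂ : OpenNormalSubgroup G) : Subgroup G) ≤ (N₁ : Subgroup G) :=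
        fun y hy => (Subgroup.mem_inf.mp hy).1
      have h2 : (Y ⊔ ((N₁ ⊓ N₂ : OpenNormalSubgroup G) : Subgroup G)) ⊓
          (Z ⊔ ((N₁ ⊓ N₂ : OpenNormalSubgroup G) : Subgroup G)) ≤
          (Y ⊔ (N₁ : Subgroup G)) ⊓ (Z ⊔ (N₁ : Subgroup G)) :=
        inf_le_inf (sup_le_sup_left hle _) (sup_le_sup_left hle _)
      exact h2 hx
    · intro x hx
      have hle : ((N₁ ⊓ N₂ : OpenNormalSubgroup G) : Subgroup G) ≤ (N₂ : Subgroup G) :=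
        fun y hy => (Subgroup.mem_inf.mp hy).2
      have h2 : (Y ⊔ ((N₁ ⊓ N₂ : OpenNormalSubgroup G) : Subgroup G)) ⊓
          (Z ⊔ ((N₁ ⊓ N₂ : OpenNormalSubgroup G) : Subgroup G)) ≤
          (Y ⊔ (N₂ : Subgroup G)) ⊓ (Z ⊔ (N₂ : Subgroup G)) :=
        inf_le_inf (sup_le_sup_left hle _) (sup_le_sup_left hle _)
      exact h2 hx
  have hst : s ∩ ⋂ N, t N = ∅ := by
    rw [Set.eq_empty_iff_forall_notMem]
    rintro x ⟨hxs, hxt⟩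
    rw [Set.mem_iInter] at hxt
    apply hxs
    have hxY : x ∈ Y := by
      have : x ∈ Y.topologicalClosure := by
        rw [mem_topologicalClosure_iff_aux]
        intro N
        exact Subgroup.mem_inf.mp (hxt N) |>.1
      rwa [← SetLike.mem_coe, Subgroup.topologicalClosure_coe, hY.closure_eq] at this
    have hxZ : x ∈ Z := by
      have : x ∈ Z.topologicalClosure := by
        rw [mem_topologicalClosure_iff_aux]
        intro N
        exact Subgroup.mem_inf.mp (hxt N) |>.2
      rwa [← SetLike.mem_coe, Subgroup.topologicalClosure_coe, hZ.closure_eq] at this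
    exact SetLike.mem_coe.mpr (Subgroup.mem_sup_left (Subgroup.mem_inf.mpr ⟨hxY, hxZ⟩))
  obtain ⟨N, hN⟩ := hscompact.elim_directed_family_closed t htc hst hdt
  refine ⟨N ⊓ M, fun x hx => (Subgroup.mem_inf.mp hx).2, ?_⟩
  have hsub : t N ⊆ (((Y ⊓ Z) ⊔ (M : Subgroup G) : Subgroup G) : Set G) := by
    intro x hx
    by_contra hxn
    exact Set.eq_empty_iff_forall_notMem.mp hN x ⟨hxn, hx⟩
  intro x hx
  have hle : ((N ⊓ M : OpenNormalSubgroup G) : Subgroup G) ≤ (N : Subgroup G) := fun y hy =>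
    (Subgroup.mem_inf.mp hy).1
  have hx' : x ∈ (Y ⊔ (N : Subgroup G)) ⊓ (Z ⊔ (N : Subgroup G)) :=
    (inf_le_inf (sup_le_sup_left hle _) (sup_le_sup_left hle _) :
      (Y ⊔ ((N ⊓ M : OpenNormalSubgroup G) : Subgroup G)) ⊓
        (Z ⊔ ((N ⊓ M : OpenNormalSubgroup G) : Subgroup G)) ≤
        (Y ⊔ (N : Subgroup G)) ⊓ (Z ⊔ (N : Subgroup G))) hx
  exact SetLike.mem_coe.mp (hsub hx')

end Aux

/-- For a profinite group `G`, the closed subgroup lattice of `G` is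
modular iff the open subgroup lattice of `G` is modular. -/
theorem closed_lattice_modular_iff_open_lattice_modular
    {G : Type*} [Group G] [TopologicalSpace G] [IsTopologicalGroup G]
    [CompactSpace G] [T2Space G] [TotallyDisconnectedSpace G] :
    (∀ X Y Z : Subgroup G,
        IsClosed (X : Set G) → IsClosed (Y : Set G) → IsClosed (Z : Set G) → X ≤ Z →
        (X ⊔ (Y ⊓ Z)).topologicalClosure = (X ⊔ Y).topologicalClosure ⊓ Z) ↔
      (∀ X Y Z : Subgroup G,
        IsOpen (X : Set G) → IsOpen (Y : Set G) → IsOpen (Z : Set G) → X ≤ Z →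
        X ⊔ (Y ⊓ Z) = (X ⊔ Y) ⊓ Z) := by
  constructor
  · intro hc X Y Z hX hY hZ hXZ
    have h := hc X Y Z (Subgroup.isClosed_of_isOpen _ hX) (Subgroup.isClosed_of_isOpen _ hY)
      (Subgroup.isClosed_of_isOpen _ hZ) hXZ
    have h1 : (X ⊔ (Y ⊓ Z)).topologicalClosure = X ⊔ (Y ⊓ Z) := by
      apply SetLike.ext'
      exact (Subgroup.isClosed_of_isOpen _ (Subgroup.isOpen_mono le_sup_left hX)).closure_eq
    have h2 : (X ⊔ Y).topologicalClosure = X ⊔ Y := by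
      apply SetLike.ext'
      exact (Subgroup.isClosed_of_isOpen _ (Subgroup.isOpen_mono le_sup_left hX)).closure_eq
    rwa [h1, h2] at h
  · intro ho X Y Z hX hY hZ hXZ
    apply le_antisymm
    · apply Subgroup.topologicalClosure_minimal
      · exact le_inf (sup_le (le_sup_left.trans (Subgroup.le_topologicalClosure _))
          (inf_le_left.trans (le_sup_right.trans (Subgroup.le_topologicalClosure _))))
          (sup_le hXZ inf_le_right)
      · rw [Subgroup.coe_inf]
        exact (Subgroup.isClosed_topologicalClosure _).inter hZ
    · intro g hg
      obtain ⟨hg1, hg2⟩ := Subgroup.mem_inf.mp hg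
      rw [mem_topologicalClosure_iff_aux]
      intro M
      obtain ⟨N, hNM, hN⟩ := exists_openNormal_aux Y Z hY hZ M
      have hNopen : IsOpen ((N : Subgroup G) : Set G) := N.toOpenSubgroup.isOpen
      have hmod := ho (X ⊔ (N : Subgroup G)) (Y ⊔ (N : Subgroup G)) (Z ⊔ (N : Subgroup G))
        (Subgroup.isOpen_mono le_sup_right hNopen)
        (Subgroup.isOpen_mono le_sup_right hNopen)
        (Subgroup.isOpen_mono le_sup_right hNopen)
        (sup_le (hXZ.trans le_sup_left) le_sup_right)
      have hg1' : g ∈ (X ⊔ (N : Subgroup G)) ⊔ (Y ⊔ (N : Subgroup G)) := by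
        have h0 := (mem_topologicalClosure_iff_aux (X ⊔ Y) g).mp hg1 N
        have hle : (X ⊔ Y) ⊔ (N : Subgroup G) ≤
            (X ⊔ (N : Subgroup G)) ⊔ (Y ⊔ (N : Subgroup G)) :=
          sup_le (sup_le (le_sup_left.trans le_sup_left)
            (le_sup_left.trans le_sup_right)) (le_sup_right.trans le_sup_left)
        exact hle h0
      have hg2' : g ∈ Z ⊔ (N : Subgroup G) := Subgroup.mem_sup_left hg2
      have hgmem : g ∈ (X ⊔ (N : Subgroup G)) ⊔
          ((Y ⊔ (N : Subgroup G)) ⊓ (Z ⊔ (N : Subgroup G))) := by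
        rw [hmod]
        exact Subgroup.mem_inf.mpr ⟨hg1', hg2'⟩
      have hfin : (X ⊔ (N : Subgroup G)) ⊔
          ((Y ⊔ (N : Subgroup G)) ⊓ (Z ⊔ (N : Subgroup G))) ≤
          (X ⊔ (Y ⊓ Z)) ⊔ (M : Subgroup G) :=
        sup_le (sup_le (le_sup_left.trans le_sup_left) (hNM.trans le_sup_right))
          (hN.trans (sup_le (le_sup_right.trans le_sup_left) le_sup_right))
      exact hfin hgmem
end

section
/- Let G be a profinite group. Then HK = KH (as subsets of G) for every pair of closed subgroups H, K of G if and only if HK = KH for every pair of open subgroups H, K of G. -/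
open scoped Pointwise

private lemma aux_subset_of_open_permute
    {G : Type*} [Group G] [TopologicalSpace G] [IsTopologicalGroup G]
    [CompactSpace G] [T2Space G] [TotallyDisconnectedSpace G]
    (hopen : ∀ H K : Subgroup G, IsOpen (H : Set G) → IsOpen (K : Set G) →
        (H : Set G) * (K : Set G) = (K : Set G) * (H : Set G))
    (H K : Subgroup G) (hH : IsClosed (H : Set G)) (hK : IsClosed (K : Set G)) :
    (H : Set G) * (K : Set G) ⊆ (K : Set G) * (H : Set G) := by
  intro x hx
  by_contra hxn
  have hcompKH : IsCompact ((K : Set G) * (H : Set G)) :=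
    hK.isCompact.mul hH.isCompact
  have hclosedKH : IsClosed ((K : Set G) * (H : Set G)) := hcompKH.isClosed
  have hVopen : IsOpen ((fun g => x * g) ⁻¹' ((K : Set G) * (H : Set G))ᶜ) :=
    hclosedKH.isOpen_compl.preimage (continuous_mul_left x)
  have h1V : (1 : G) ∈ (fun g => x * g) ⁻¹' ((K : Set G) * (H : Set G))ᶜ := by
    simpa using hxn
  obtain ⟨W, hWclopen, h1W, hWV⟩ := compact_exists_isClopen_in_isOpen hVopen h1V
  obtain ⟨N, hNW⟩ :=
    IsTopologicalGroup.exist_openNormalSubgroup_sub_clopen_nhds_of_one hWclopen h1W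
  have hNnormal : N.toSubgroup.Normal := N.isNormal'
  have hHN : IsOpen ((H ⊔ N.toSubgroup : Subgroup G) : Set G) :=
    Subgroup.isOpen_mono le_sup_right N.isOpen
  have hKN : IsOpen ((K ⊔ N.toSubgroup : Subgroup G) : Set G) :=
    Subgroup.isOpen_mono le_sup_right N.isOpen
  have hperm := hopen _ _ hHN hKN
  have hxmem : x ∈ ((H ⊔ N.toSubgroup : Subgroup G) : Set G) *
      ((K ⊔ N.toSubgroup : Subgroup G) : Set G) := by
    refine Set.mul_subset_mul ?_ ?_ hx
    · exact SetLike.coe_subset_coe.mpr le_sup_left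
    · exact SetLike.coe_subset_coe.mpr le_sup_left
  rw [hperm] at hxmem
  -- rewrite (K ⊔ N) * (H ⊔ N) as (K * H) * N
  have hKNset : ((K ⊔ N.toSubgroup : Subgroup G) : Set G)
      = (K : Set G) * (N.toSubgroup : Set G) := Subgroup.mul_normal K N.toSubgroup
  have hHNset : ((H ⊔ N.toSubgroup : Subgroup G) : Set G)
      = (N.toSubgroup : Set G) * (H : Set G) := by
    rw [sup_comm]; exact Subgroup.normal_mul N.toSubgroup H
  rw [hKNset, hHNset] at hxmem
  have hcalc : (K : Set G) * (N.toSubgroup : Set G) * ((N.toSubgroup : Set G) * (H : Set G))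
      = (K : Set G) * (H : Set G) * (N.toSubgroup : Set G) := by
    calc (K : Set G) * (N.toSubgroup : Set G) * ((N.toSubgroup : Set G) * (H : Set G))
        = (K : Set G) * ((N.toSubgroup : Set G) * (N.toSubgroup : Set G) * (H : Set G)) := by
          simp only [mul_assoc]
      _ = (K : Set G) * ((N.toSubgroup : Set G) * (H : Set G)) := by
          rw [coe_mul_coe]
      _ = (K : Set G) * ((H : Set G) * (N.toSubgroup : Set G)) := by
          rw [← Subgroup.set_mul_normal_comm (H : Set G) N.toSubgroup]
      _ = (K : Set G) * (H : Set G) * (N.toSubgroup : Set G) := by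
          rw [mul_assoc]
  rw [hcalc] at hxmem
  obtain ⟨y, hy, n, hn, rfl⟩ := hxmem
  have hninv : n⁻¹ ∈ N.toSubgroup := inv_mem hn
  have : y * n * n⁻¹ ∈ ((K : Set G) * (H : Set G))ᶜ := hVopen.mem_nhds_iff.mp ?_ |>.elim
  · exact this (by simpa using hy)
  · exact absurd (hWV (hNW hninv)) (by simp [hy])

/-- In a profinite group `G`, every pair of closed subgroups permutes
iff every pair of open subgroups permutes. -/
theorem closed_subgroups_permute_iff_open_subgroups_permute
    {G : Type*} [Group G] [TopologicalSpace G] [IsTopologicalGroup G]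
    [CompactSpace G] [T2Space G] [TotallyDisconnectedSpace G] :
    (∀ H K : Subgroup G, IsClosed (H : Set G) → IsClosed (K : Set G) →
        (H : Set G) * (K : Set G) = (K : Set G) * (H : Set G)) ↔
      (∀ H K : Subgroup G, IsOpen (H : Set G) → IsOpen (K : Set G) →
        (H : Set G) * (K : Set G) = (K : Set G) * (H : Set G)) := by
  constructor
  · intro h H K hH hK
    exact h H K (H.isClosed_of_isOpen hH) (K.isClosed_of_isOpen hK)
  · intro h H K hH hK
    exact Set.Subset.antisymm (aux_subset_of_open_permute h H K hH hK)
      (aux_subset_of_open_permute h K H hK hH)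
end

section
/- Let G be a profinite group and let M be a closed subgroup of G. Then M is a modular element of L_c(G) if and only if, for every open normal subgroup N of G, the image of M in the finite quotient group G/N is a modular element of the lattice of all subgroups of G/N. -/
/-- A closed subgroup `M` of a profinite group `G` is a modular element of the lattice of
closed subgroups of `G`. -/
def IsModularElementClosed {G : Type*} [Group G] [TopologicalSpace G] [IsTopologicalGroup G]
    (M : Subgroup G) : Prop :=
  (∀ X Z : Subgroup G, IsClosed (X : Set G) → IsClosed (Z : Set G) → X ≤ Z →
      (X ⊔ (M ⊓ Z)).topologicalClosure = (X ⊔ M).topologicalClosure ⊓ Z) ∧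
  (∀ Y Z : Subgroup G, IsClosed (Y : Set G) → IsClosed (Z : Set G) → M ≤ Z →
      (M ⊔ (Y ⊓ Z)).topologicalClosure = (M ⊔ Y).topologicalClosure ⊓ Z)

/-- A subgroup `m` of a group `K` is a modular element of the subgroup lattice of `K`. -/
def IsModularElement {K : Type*} [Group K] (m : Subgroup K) : Prop :=
  (∀ X Z : Subgroup K, X ≤ Z → X ⊔ (m ⊓ Z) = (X ⊔ m) ⊓ Z) ∧
  (∀ Y Z : Subgroup K, m ≤ Z → m ⊔ (Y ⊓ Z) = (m ⊔ Y) ⊓ Z)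

section Aux

variable {G : Type*} [Group G] [TopologicalSpace G] [IsTopologicalGroup G]

/-- Any open neighbourhood of `1` in a profinite group contains an open normal subgroup. -/
lemma aux_exists_openNormal [CompactSpace G] [T2Space G] [TotallyDisconnectedSpace G]
    {U : Set G} (hU : IsOpen U) (h1 : (1 : G) ∈ U) :
    ∃ N : Subgroup G, N.Normal ∧ IsOpen (N : Set G) ∧ (N : Set G) ⊆ U := by
  obtain ⟨V, hV, h1V, hVU⟩ := compact_exists_isClopen_in_isOpen hU h1
  obtain ⟨H, hH⟩ := IsTopologicalGroup.exist_openNormalSubgroup_sub_clopen_nhds_of_one hV h1V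
  exact ⟨H.toSubgroup, H.isNormal', H.toOpenSubgroup.isOpen, fun x hx => hVU (hH hx)⟩

/-- If a subgroup is closed, its topological closure is itself. -/
lemma aux_topologicalClosure_eq {H : Subgroup G} (h : IsClosed (H : Set G)) :
    H.topologicalClosure = H :=
  le_antisymm (H.topologicalClosure_minimal le_rfl h) H.le_topologicalClosure

/-- Membership in the closure of a subgroup is detected by open normal subgroups. -/
lemma aux_mem_topologicalClosure_iff [CompactSpace G] [T2Space G] [TotallyDisconnectedSpace G]
    (H : Subgroup G) (g : G) :
    g ∈ H.topologicalClosure ↔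
      ∀ N : Subgroup G, N.Normal → IsOpen (N : Set G) → g ∈ H ⊔ N := by
  constructor
  · intro hg N hN hNo
    have hopen : IsOpen ((H ⊔ N : Subgroup G) : Set G) := Subgroup.isOpen_mono le_sup_right hNo
    exact H.topologicalClosure_minimal le_sup_left ((H ⊔ N).isClosed_of_isOpen hopen) hg
  · intro h
    by_contra hg
    have hg' : g ∉ closure (H : Set G) := hg
    have hUo : IsOpen (closure (H : Set G))ᶜ := isClosed_closure.isOpen_compl
    have hVo : IsOpen ((fun n => g * n) ⁻¹' (closure (H : Set G))ᶜ) :=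
      hUo.preimage (continuous_mul_left g)
    have h1V : (1 : G) ∈ (fun n => g * n) ⁻¹' (closure (H : Set G))ᶜ := by
      simpa using hg'
    obtain ⟨N, hNn, hNo, hNV⟩ := aux_exists_openNormal hVo h1V
    have hgHN := h N hNn hNo
    haveI := hNn
    rw [← SetLike.mem_coe, Subgroup.mul_normal H N] at hgHN
    obtain ⟨a, ha, n, hn, rfl⟩ := hgHN
    have : a * n * n⁻¹ ∈ (closure (H : Set G))ᶜ := hNV (inv_mem hn)
    simp only [mul_inv_cancel_right, Set.mem_compl_iff] at this
    exact this (subset_closure ha)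

/-- Compactness: any open normal “error term” `N₀` around `M ⊓ Z` absorbs
`(M ⊔ N) ⊓ (Z ⊔ N)` for small enough open normal `N`. -/
lemma aux_inf_approx [CompactSpace G] [T2Space G] [TotallyDisconnectedSpace G]
    (M Z : Subgroup G) (hM : IsClosed (M : Set G)) (hZ : IsClosed (Z : Set G))
    (N₀ : Subgroup G) (hN₀n : N₀.Normal) (hN₀o : IsOpen (N₀ : Set G)) :
    ∃ N : Subgroup G, N.Normal ∧ IsOpen (N : Set G) ∧ N ≤ N₀ ∧
      (M ⊔ N) ⊓ (Z ⊔ N) ≤ (M ⊓ Z) ⊔ N₀ := by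
  let ι := {N : Subgroup G // N.Normal ∧ IsOpen (N : Set G)}
  haveI : Nonempty ι := ⟨⟨⊤, inferInstance, by simp⟩⟩
  let t : ι → Set G := fun i => ((M ⊔ i.1 : Subgroup G) : Set G) ∩ ((Z ⊔ i.1 : Subgroup G) : Set G)
  have htopen : ∀ (A : Subgroup G) (i : ι), IsOpen ((A ⊔ i.1 : Subgroup G) : Set G) :=
    fun A i => Subgroup.isOpen_mono le_sup_right i.2.2
  have htc : ∀ i, IsClosed (t i) := fun i =>
    (((M ⊔ i.1).isClosed_of_isOpen (htopen M i))).inter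
      ((Z ⊔ i.1).isClosed_of_isOpen (htopen Z i))
  have hsopen : IsOpen ((((M ⊓ Z) ⊔ N₀ : Subgroup G)) : Set G) := Subgroup.isOpen_mono le_sup_right hN₀o
  have hscompact : IsCompact ((((M ⊓ Z) ⊔ N₀ : Subgroup G) : Set G)ᶜ) :=
    hsopen.isClosed_compl.isCompact
  have hst : ((((M ⊓ Z) ⊔ N₀ : Subgroup G) : Set G)ᶜ ∩ ⋂ i, t i) = ∅ := by
    rw [Set.eq_empty_iff_forall_notMem]
    rintro x ⟨hxs, hxt⟩
    rw [Set.mem_iInter] at hxt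
    have hxM : x ∈ M := by
      have : x ∈ M.topologicalClosure := by
        rw [aux_mem_topologicalClosure_iff]
        intro N hNn hNo
        exact (hxt ⟨N, hNn, hNo⟩).1
      rwa [aux_topologicalClosure_eq hM] at this
    have hxZ : x ∈ Z := by
      have : x ∈ Z.topologicalClosure := by
        rw [aux_mem_topologicalClosure_iff]
        intro N hNn hNo
        exact (hxt ⟨N, hNn, hNo⟩).2
      rwa [aux_topologicalClosure_eq hZ] at this
    exact hxs (le_sup_left (α := Subgroup G) ⟨hxM, hxZ⟩)
  have hdt : Directed (· ⊇ ·) t := by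
    intro i j
    haveI := i.2.1; haveI := j.2.1
    refine ⟨⟨i.1 ⊓ j.1, inferInstance, by rw [Subgroup.coe_inf]; exact i.2.2.inter j.2.2⟩, ?_, ?_⟩
    · exact Set.inter_subset_inter (SetLike.coe_subset_coe.2 (sup_le_sup_left inf_le_left _))
        (SetLike.coe_subset_coe.2 (sup_le_sup_left inf_le_left _))
    · exact Set.inter_subset_inter (SetLike.coe_subset_coe.2 (sup_le_sup_left inf_le_right _))
        (SetLike.coe_subset_coe.2 (sup_le_sup_left inf_le_right _))
  obtain ⟨i, hi⟩ := hscompact.elim_directed_family_closed t htc hst hdt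
  have hisub : t i ⊆ (((M ⊓ Z) ⊔ N₀ : Subgroup G) : Set G) := by
    intro x hx
    by_contra hxn
    exact Set.eq_empty_iff_forall_notMem.1 hi x ⟨hxn, hx⟩
  haveI := i.2.1
  refine ⟨i.1 ⊓ N₀, inferInstance, by rw [Subgroup.coe_inf]; exact i.2.2.inter hN₀o,
    inf_le_right, ?_⟩
  intro x hx
  have hx' : x ∈ t i :=
    ⟨SetLike.coe_subset_coe.2 (sup_le_sup_left inf_le_left _) hx.1,
     SetLike.coe_subset_coe.2 (sup_le_sup_left inf_le_left _) hx.2⟩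
  exact hisub hx'

/-- The image of an intersection is the intersection of images, provided the kernel
is contained in one factor. -/
lemma aux_map_inf {K : Type*} [Group K] (f : G →* K) (A B : Subgroup G)
    (h : f.ker ≤ B) : (A ⊓ B).map f = A.map f ⊓ B.map f := by
  refine le_antisymm (le_inf (Subgroup.map_mono inf_le_left)
    (Subgroup.map_mono inf_le_right)) ?_
  rintro x ⟨hxa, hxb⟩
  obtain ⟨a, ha, rfl⟩ := hxa
  obtain ⟨b, hb, hab⟩ := hxb
  have hker : b⁻¹ * a ∈ f.ker := by
    rw [MonoidHom.mem_ker, map_mul, map_inv, hab, inv_mul_cancel]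
  have haB : a ∈ B := by
    have := mul_mem hb (h hker)
    rwa [mul_inv_cancel_left] at this
  exact ⟨a, ⟨ha, haB⟩, rfl⟩

end Aux

/-- A closed subgroup `M` of a profinite group `G` is a modular element
of the closed subgroup lattice of `G` iff, for every open normal subgroup `N` of `G`, the
image of `M` in `G/N` is a modular element of the subgroup lattice of `G/N`. -/
theorem isModularElementClosed_iff_modular_in_open_quotients
    {G : Type*} [Group G] [TopologicalSpace G] [IsTopologicalGroup G]
    [CompactSpace G] [T2Space G] [TotallyDisconnectedSpace G]
    (M : Subgroup G) (hM : IsClosed (M : Set G)) :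
    IsModularElementClosed M ↔
      ∀ (N : Subgroup G) [N.Normal], IsOpen (N : Set G) →
        IsModularElement (M.map (QuotientGroup.mk' N)) := by
  constructor
  · rintro ⟨h1, h2⟩ N hNn hNo
    set π := QuotientGroup.mk' N with hπ
    have hker : π.ker = N := QuotientGroup.ker_mk' N
    have hsurj : Function.Surjective π := QuotientGroup.mk'_surjective N
    have hNle : ∀ W : Subgroup (G ⧸ N), N ≤ W.comap π := by
      intro W x hx
      have : π x = 1 := by
        rw [← MonoidHom.mem_ker, hker]; exact hx
      rw [Subgroup.mem_comap, this]; exact W.one_mem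
    have hopen : ∀ W : Subgroup (G ⧸ N), IsOpen ((W.comap π : Subgroup G) : Set G) :=
      fun W => Subgroup.isOpen_mono (hNle W) hNo
    have hclosed : ∀ W : Subgroup (G ⧸ N), IsClosed ((W.comap π : Subgroup G) : Set G) :=
      fun W => (W.comap π).isClosed_of_isOpen (hopen W)
    constructor
    · intro Xb Zb hXZ
      set X := Xb.comap π
      set Z := Zb.comap π
      have hXZ' : X ≤ Z := Subgroup.comap_mono hXZ
      have E := h1 X Z (hclosed Xb) (hclosed Zb) hXZ'
      have hL : IsClosed ((X ⊔ (M ⊓ Z) : Subgroup G) : Set G) :=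
        Subgroup.isClosed_of_isOpen _ (Subgroup.isOpen_mono le_sup_left (hopen Xb))
      have hR : IsClosed ((X ⊔ M : Subgroup G) : Set G) :=
        Subgroup.isClosed_of_isOpen _ (Subgroup.isOpen_mono le_sup_left (hopen Xb))
      rw [aux_topologicalClosure_eq hL, aux_topologicalClosure_eq hR] at E
      have hmX : X.map π = Xb := Subgroup.map_comap_eq_self_of_surjective hsurj _
      have hmZ : Z.map π = Zb := Subgroup.map_comap_eq_self_of_surjective hsurj _
      have hkZ : π.ker ≤ Z := by rw [hker]; exact hNle Zb
      calc Xb ⊔ (M.map π ⊓ Zb)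
          = (X.map π) ⊔ ((M ⊓ Z).map π) := by rw [hmX, aux_map_inf π M Z hkZ, hmZ]
        _ = (X ⊔ (M ⊓ Z)).map π := by rw [Subgroup.map_sup]
        _ = ((X ⊔ M) ⊓ Z).map π := by rw [E]
        _ = (X ⊔ M).map π ⊓ Zb := by rw [aux_map_inf π (X ⊔ M) Z hkZ, hmZ]
        _ = (Xb ⊔ M.map π) ⊓ Zb := by rw [Subgroup.map_sup, hmX]
    · intro Yb Zb hMZ
      set Y := Yb.comap π
      set Z := Zb.comap π
      have hMZ' : M ≤ Z := fun m hm => hMZ (Subgroup.mem_map_of_mem π hm)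
      have E := h2 Y Z (hclosed Yb) (hclosed Zb) hMZ'
      have hL : IsClosed ((M ⊔ (Y ⊓ Z) : Subgroup G) : Set G) :=
        Subgroup.isClosed_of_isOpen _
          (Subgroup.isOpen_mono (le_trans (le_inf (hNle Yb) (hNle Zb)) le_sup_right)
            hNo)
      have hR : IsClosed ((M ⊔ Y : Subgroup G) : Set G) :=
        Subgroup.isClosed_of_isOpen _ (Subgroup.isOpen_mono le_sup_right (hopen Yb))
      rw [aux_topologicalClosure_eq hL, aux_topologicalClosure_eq hR] at E
      have hmY : Y.map π = Yb := Subgroup.map_comap_eq_self_of_surjective hsurj _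
      have hmZ : Z.map π = Zb := Subgroup.map_comap_eq_self_of_surjective hsurj _
      have hkZ : π.ker ≤ Z := by rw [hker]; exact hNle Zb
      calc M.map π ⊔ (Yb ⊓ Zb)
          = M.map π ⊔ (Y ⊓ Z).map π := by rw [aux_map_inf π Y Z hkZ, hmY, hmZ]
        _ = (M ⊔ (Y ⊓ Z)).map π := by rw [Subgroup.map_sup]
        _ = ((M ⊔ Y) ⊓ Z).map π := by rw [E]
        _ = (M ⊔ Y).map π ⊓ Zb := by rw [aux_map_inf π (M ⊔ Y) Z hkZ, hmZ]
        _ = (M.map π ⊔ Yb) ⊓ Zb := by rw [Subgroup.map_sup, hmY]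
  · intro h
    constructor
    · intro X Z hX hZ hXZ
      refine le_antisymm ?_ ?_
      · refine Subgroup.topologicalClosure_minimal _ (sup_le ?_ ?_) ?_
        · exact le_inf ((Subgroup.le_topologicalClosure _).trans'
            le_sup_left) hXZ
        · exact le_inf ((Subgroup.le_topologicalClosure _).trans'
            ((inf_le_left).trans le_sup_right)) inf_le_right
        · have : ((((X ⊔ M).topologicalClosure ⊓ Z) : Subgroup G) : Set G)
              = ((X ⊔ M).topologicalClosure : Set G) ∩ (Z : Set G) := rfl
          rw [this]
          exact ((X ⊔ M).isClosed_topologicalClosure).inter hZ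
      · intro g hg
        obtain ⟨hg1, hg2⟩ := hg
        rw [aux_mem_topologicalClosure_iff]
        intro N₀ hN₀n hN₀o
        obtain ⟨N, hNn, hNo, hNN₀, habs⟩ := aux_inf_approx M Z hM hZ N₀ hN₀n hN₀o
        haveI := hNn
        set π := QuotientGroup.mk' N with hπ
        have hker : π.ker = N := QuotientGroup.ker_mk' N
        have hmapN : N.map π = ⊥ := by
          refine le_antisymm ?_ bot_le
          rintro x ⟨n, hn, rfl⟩
          simpa [Subgroup.mem_bot, hπ, QuotientGroup.eq_one_iff] using hn
        obtain ⟨hq1, _⟩ := h N hNo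
        have hgXM : g ∈ (X ⊔ M) ⊔ N := by
          have := (aux_mem_topologicalClosure_iff (X ⊔ M) g).1 hg1
          exact this N hNn hNo
        have hπg1 : π g ∈ X.map π ⊔ M.map π := by
          have : π g ∈ ((X ⊔ M) ⊔ N).map π := Subgroup.mem_map_of_mem π hgXM
          rwa [Subgroup.map_sup, Subgroup.map_sup, hmapN, sup_bot_eq] at this
        have hπg2 : π g ∈ Z.map π := Subgroup.mem_map_of_mem π hg2
        have hmod := hq1 (X.map π) (Z.map π) (Subgroup.map_mono hXZ)
        have hπg : π g ∈ X.map π ⊔ (M.map π ⊓ Z.map π) := by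
          rw [hmod]; exact ⟨hπg1, hπg2⟩
        have hMN : M.map π = (M ⊔ N).map π := by
          rw [Subgroup.map_sup, hmapN, sup_bot_eq]
        have hZN : Z.map π = (Z ⊔ N).map π := by
          rw [Subgroup.map_sup, hmapN, sup_bot_eq]
        have hrw : X.map π ⊔ (M.map π ⊓ Z.map π)
            = (X ⊔ ((M ⊔ N) ⊓ (Z ⊔ N))).map π := by
          rw [hMN, hZN, ← aux_map_inf π (M ⊔ N) (Z ⊔ N) (by rw [hker]; exact le_sup_right),
            ← Subgroup.map_sup]
        rw [hrw] at hπg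
        have hgW : g ∈ (X ⊔ ((M ⊔ N) ⊓ (Z ⊔ N))) ⊔ N := by
          have := Subgroup.mem_comap.2 hπg
          rw [Subgroup.comap_map_eq, hker] at this
          exact this
        refine (sup_le (sup_le ?_ ?_) ?_ : (X ⊔ ((M ⊔ N) ⊓ (Z ⊔ N))) ⊔ N ≤ (X ⊔ (M ⊓ Z)) ⊔ N₀) hgW
        · exact le_sup_left.trans' le_sup_left
        · exact habs.trans (sup_le (le_sup_left.trans' le_sup_right) le_sup_right)
        · exact hNN₀.trans le_sup_right
    · intro Y Z hY hZ hMZ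
      refine le_antisymm ?_ ?_
      · refine Subgroup.topologicalClosure_minimal _ (sup_le ?_ ?_) ?_
        · exact le_inf ((Subgroup.le_topologicalClosure _).trans'
            le_sup_left) hMZ
        · exact le_inf ((Subgroup.le_topologicalClosure _).trans'
            ((inf_le_left).trans le_sup_right)) inf_le_right
        · have : ((((M ⊔ Y).topologicalClosure ⊓ Z) : Subgroup G) : Set G)
              = ((M ⊔ Y).topologicalClosure : Set G) ∩ (Z : Set G) := rfl
          rw [this]
          exact ((M ⊔ Y).isClosed_topologicalClosure).inter hZ
      · intro g hg
        obtain ⟨hg1, hg2⟩ := hg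
        rw [aux_mem_topologicalClosure_iff]
        intro N₀ hN₀n hN₀o
        obtain ⟨N, hNn, hNo, hNN₀, habs⟩ := aux_inf_approx Y Z hY hZ N₀ hN₀n hN₀o
        haveI := hNn
        set π := QuotientGroup.mk' N with hπ
        have hker : π.ker = N := QuotientGroup.ker_mk' N
        have hmapN : N.map π = ⊥ := by
          refine le_antisymm ?_ bot_le
          rintro x ⟨n, hn, rfl⟩
          simpa [Subgroup.mem_bot, hπ, QuotientGroup.eq_one_iff] using hn
        obtain ⟨_, hq2⟩ := h N hNo
        have hgMY : g ∈ (M ⊔ Y) ⊔ N := by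
          have := (aux_mem_topologicalClosure_iff (M ⊔ Y) g).1 hg1
          exact this N hNn hNo
        have hπg1 : π g ∈ M.map π ⊔ Y.map π := by
          have : π g ∈ ((M ⊔ Y) ⊔ N).map π := Subgroup.mem_map_of_mem π hgMY
          rwa [Subgroup.map_sup, Subgroup.map_sup, hmapN, sup_bot_eq] at this
        have hπg2 : π g ∈ Z.map π := Subgroup.mem_map_of_mem π hg2
        have hmod := hq2 (Y.map π) (Z.map π) (Subgroup.map_mono hMZ)
        have hπg : π g ∈ M.map π ⊔ (Y.map π ⊓ Z.map π) := by
          rw [hmod]; exact ⟨hπg1, hπg2⟩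
        have hYN : Y.map π = (Y ⊔ N).map π := by
          rw [Subgroup.map_sup, hmapN, sup_bot_eq]
        have hZN : Z.map π = (Z ⊔ N).map π := by
          rw [Subgroup.map_sup, hmapN, sup_bot_eq]
        have hrw : M.map π ⊔ (Y.map π ⊓ Z.map π)
            = (M ⊔ ((Y ⊔ N) ⊓ (Z ⊔ N))).map π := by
          rw [hYN, hZN, ← aux_map_inf π (Y ⊔ N) (Z ⊔ N) (by rw [hker]; exact le_sup_right),
            ← Subgroup.map_sup]
        rw [hrw] at hπg
        have hgW : g ∈ (M ⊔ ((Y ⊔ N) ⊓ (Z ⊔ N))) ⊔ N := by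
          have := Subgroup.mem_comap.2 hπg
          rw [Subgroup.comap_map_eq, hker] at this
          exact this
        refine (sup_le (sup_le ?_ ?_) ?_ :
          (M ⊔ ((Y ⊔ N) ⊓ (Z ⊔ N))) ⊔ N ≤ (M ⊔ (Y ⊓ Z)) ⊔ N₀) hgW
        · exact le_sup_left.trans' le_sup_left
        · exact habs.trans (sup_le (le_sup_left.trans' le_sup_right) le_sup_right)
        · exact hNN₀.trans le_sup_right
end
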